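/- arXiv:math/0703076 — 7 statements merged into one kernel-verified Lean document; each statement's English description precedes it below -/
import Mathlib

section
/- Fix a probability space with distribution F, a measurable function a with essential infimum ξ, and u with max(0,ξ) < u < E = ∫ a dF. For t ∈ (0, u/(u-ξ)) define w_u(t) = ∫ (a(x)-u)/(a(x)t - ut + u) dF(x). Then w_u is strictly decreasing in t. -/
open MeasureTheory Real Filter Set

lemma aux_abs {ξ u v r : ℝ} (hu0 : 0 < u) (hξu : ξ < u) (hr : 0 < r)
    (hru : (u - ξ) * r < u) (hv : ξ ≤ v) :
    |(v - u) / (v * r - u * r + u)| ≤ 1/r + (u - ξ)/(u - (u-ξ)*r) := by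
  have hc : 0 < u - (u-ξ)*r := by linarith
  have hD : 0 < v * r - u * r + u := by
    nlinarith [mul_nonneg (sub_nonneg.mpr hv) hr.le]
  rw [abs_div, abs_of_pos hD]
  rcases le_or_gt u v with h | h
  · rw [abs_of_nonneg (by linarith)]
    have h1 : (v - u) / (v * r - u * r + u) ≤ 1 / r := by
      rw [div_le_div_iff₀ hD hr]
      nlinarith
    have h2 : 0 ≤ (u - ξ)/(u - (u-ξ)*r) := div_nonneg (by linarith) hc.le
    linarith
  · rw [abs_of_neg (by linarith)]
    have h1 : -(v - u) / (v * r - u * r + u) ≤ (u - ξ)/(u - (u-ξ)*r) := by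
      apply div_le_div₀ (by linarith) (by linarith) hc
      nlinarith [mul_nonneg (sub_nonneg.mpr hv) hr.le]
    have h2 : 0 ≤ 1/r := by positivity
    linarith

/-- For `max(0,ξ) < u < E` (where `E = ∫ a dF`, possibly `+∞`, i.e. `a` not
integrable), the function `w_u(t) = ∫ (a-u)/(a t - u t + u) dF` is strictly
decreasing on `(0, u/(u-ξ))`. -/
theorem stmt2 {Ω : Type*} [MeasurableSpace Ω] (μ : Measure Ω) [IsProbabilityMeasure μ]
    (a : Ω → ℝ) (hmeas : Measurable a) (ξ : ℝ)
    (hge : ∀ᵐ x ∂μ, ξ ≤ a x)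
    (hinf : ∀ ε > 0, 0 < μ {x | a x < ξ + ε})
    (hnc : ∃ δ > 0, μ {x | a x < ξ + δ} < 1)
    (u : ℝ) (hu : max 0 ξ < u)
    (huE : u < ∫ x, a x ∂μ ∨ ¬ Integrable a μ) :
    StrictAntiOn (fun t => ∫ x, (a x - u) / (a x * t - u * t + u) ∂μ)
      (Ioo 0 (u / (u - ξ))) := by
  have hu0 : 0 < u := lt_of_le_of_lt (le_max_left 0 ξ) hu
  have hξu : ξ < u := lt_of_le_of_lt (le_max_right 0 ξ) hu
  have hξu' : 0 < u - ξ := by linarith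
  -- key: convert `r < u/(u-ξ)` into `(u-ξ)*r < u`
  have hconv : ∀ r ∈ Ioo (0:ℝ) (u/(u-ξ)), (u - ξ) * r < u := by
    intro r hr
    have := (lt_div_iff₀ hξu').mp hr.2
    linarith [this]
  have hint : ∀ r ∈ Ioo (0:ℝ) (u/(u-ξ)),
      Integrable (fun x => (a x - u) / (a x * r - u * r + u)) μ := by
    intro r hr
    apply Integrable.mono' (integrable_const (1/r + (u - ξ)/(u - (u-ξ)*r)))
    · exact (Measurable.div (hmeas.sub measurable_const)
        (((hmeas.mul measurable_const).sub measurable_const).add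
          measurable_const)).aestronglyMeasurable
    · filter_upwards [hge] with x hx
      rw [Real.norm_eq_abs]
      exact aux_abs hu0 hξu hr.1 (hconv r hr) hx
  intro s hs t ht hst
  simp only
  have hIs := hint s hs
  have hIt := hint t ht
  have hrus := hconv s hs
  have hrut := hconv t ht
  set g : Ω → ℝ := fun x =>
    (a x - u) / (a x * s - u * s + u) - (a x - u) / (a x * t - u * t + u) with hg
  have hIg : Integrable g μ := hIs.sub hIt
  -- pointwise: denominators positive and g x = (a x - u)^2 * (t-s) / (Ds*Dt)
  have hptD : ∀ x, ξ ≤ a x → 0 < a x * s - u * s + u ∧ 0 < a x * t - u * t + u := by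
    intro x hx
    constructor
    · nlinarith [mul_nonneg (sub_nonneg.mpr hx) hs.1.le]
    · nlinarith [mul_nonneg (sub_nonneg.mpr hx) ht.1.le]
  have hform : ∀ x, ξ ≤ a x →
      g x = (a x - u)^2 * (t - s) / ((a x * s - u * s + u) * (a x * t - u * t + u)) := by
    intro x hx
    obtain ⟨h1, h2⟩ := hptD x hx
    simp only [hg]
    rw [div_sub_div _ _ h1.ne' h2.ne']
    congr 1; ring
  have hnonneg : 0 ≤ᵐ[μ] g := by
    filter_upwards [hge] with x hx
    rw [hform x hx]
    obtain ⟨h1, h2⟩ := hptD x hx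
    apply div_nonneg
    · exact mul_nonneg (sq_nonneg _) (by linarith)
    · exact (mul_pos h1 h2).le
  have hpos : 0 < ∫ x, g x ∂μ := by
    rw [integral_pos_iff_support_of_nonneg_ae hnonneg hIg]
    set ε : ℝ := (u - ξ)/2 with hε
    have hε0 : 0 < ε := by positivity
    have hεu : ξ + ε < u := by rw [hε]; linarith
    have hN : μ {x | ¬ ξ ≤ a x} = 0 := ae_iff.mp hge
    have hsub : {x | a x < ξ + ε} \ {x | ¬ ξ ≤ a x} ⊆ Function.support g := by
      intro x hx
      obtain ⟨hx1, hx2⟩ := hx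
      simp only [Set.mem_setOf_eq, not_not] at hx1 hx2
      have hxξ : ξ ≤ a x := hx2
      have hxu : a x ≠ u := by
        have : a x < u := lt_of_lt_of_le hx1 (le_of_lt hεu)
        exact ne_of_lt this
      obtain ⟨h1, h2⟩ := hptD x hxξ
      have : 0 < g x := by
        rw [hform x hxξ]
        apply div_pos
        · exact mul_pos (pow_two_pos_of_ne_zero (sub_ne_zero.mpr hxu)) (by linarith)
        · exact mul_pos h1 h2
      exact ne_of_gt this
    calc (0:ENNReal) < μ {x | a x < ξ + ε} := hinf ε hε0
      _ = μ ({x | a x < ξ + ε} \ {x | ¬ ξ ≤ a x}) := (measure_diff_null hN).symm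
      _ ≤ μ (Function.support g) := measure_mono hsub
  have := integral_sub hIs hIt
  have heq : ∫ x, g x ∂μ =
      (∫ x, (a x - u) / (a x * s - u * s + u) ∂μ)
        - ∫ x, (a x - u) / (a x * t - u * t + u) ∂μ := this
  linarith [hpos, heq ▸ hpos]
end

section
/- If max(0, ξ + 1/H_ξ) < u < E, then the equation w_u(t) = 0 has a unique solution t̃_u in the interval (0, u/(u-ξ)), where w_u(t) = ∫ (a-u)/(a t - u t + u) dF. -/
open MeasureTheory Real Filter Set
open scoped ENNReal

section Stmt5Aux
variable {Ω : Type*} [MeasurableSpace Ω] {μ : Measure Ω} [IsProbabilityMeasure μ]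
  {a : Ω → ℝ} {ξ u : ℝ}

lemma den_key {a ξ u t : ℝ} (hξu : ξ < u) (ha : ξ ≤ a) (ht0 : 0 < t)
    (htT : t < u / (u - ξ)) : 0 < u - t * (u - ξ) ∧ u - t * (u - ξ) ≤ a * t - u * t + u := by
  have h1 : t * (u - ξ) < u := (lt_div_iff₀ (by linarith)).1 htT
  constructor
  · linarith
  · nlinarith [mul_nonneg ht0.le (sub_nonneg.2 ha)]

lemma den_pos {a ξ u t : ℝ} (hξu : ξ < u) (ha : ξ ≤ a) (ht0 : 0 < t)
    (htT : t < u / (u - ξ)) : 0 < a * t - u * t + u := by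
  obtain ⟨h1, h2⟩ := den_key hξu ha ht0 htT; linarith

lemma abs_f_le {a ξ u s t t' : ℝ} (hξu : ξ < u) (hu0 : 0 < u) (ha : ξ ≤ a)
    (hs : 0 < s) (hst : s ≤ t) (htt' : t ≤ t') (ht' : t' < u / (u - ξ)) :
    |(a - u) / (a * t - u * t + u)| ≤ max s⁻¹ ((u - ξ) / (u - t' * (u - ξ))) := by
  have ht0 : 0 < t := hs.trans_le hst
  have htT : t < u / (u - ξ) := lt_of_le_of_lt htt' ht'
  have hden : 0 < a * t - u * t + u := den_pos hξu ha ht0 htT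
  have ht'0 : 0 < u - t' * (u - ξ) := by
    have h1 : t' * (u - ξ) < u := (lt_div_iff₀ (by linarith)).1 ht'
    linarith
  rcases le_or_gt u a with h | h
  · refine le_max_iff.mpr (Or.inl ?_)
    rw [abs_of_nonneg (div_nonneg (by linarith) hden.le), div_le_iff₀ hden]
    have h2 : t⁻¹ * (a * t - u * t + u) = (a - u) + u / t := by field_simp
    have h3 : t⁻¹ ≤ s⁻¹ := by gcongr
    have h4 : 0 ≤ u / t := by positivity
    nlinarith [mul_le_mul_of_nonneg_right h3 hden.le]
  · refine le_max_iff.mpr (Or.inr ?_)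
    rw [abs_of_nonpos (div_nonpos_of_nonpos_of_nonneg (by linarith) hden.le), neg_div']
    rw [neg_sub]
    refine div_le_div₀ (by linarith) (by linarith) ht'0 ?_
    have h5 := (den_key hξu ha ht0 htT).2
    nlinarith [mul_le_mul_of_nonneg_right htt' (sub_nonneg.2 hξu.le)]


lemma meas_f (hmeas : Measurable a) (u t : ℝ) :
    Measurable (fun x => (a x - u) / (a x * t - u * t + u)) :=
  (hmeas.sub measurable_const).div
    (((hmeas.mul_const t).sub measurable_const).add measurable_const)

lemma integrable_f (hmeas : Measurable a) (hge : ∀ᵐ x ∂μ, ξ ≤ a x)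
    (hξu : ξ < u) (hu0 : 0 < u) {t : ℝ} (ht0 : 0 < t) (htT : t < u / (u - ξ)) :
    Integrable (fun x => (a x - u) / (a x * t - u * t + u)) μ := by
  refine Integrable.mono' (integrable_const (max t⁻¹ ((u - ξ) / (u - t * (u - ξ)))))
    (meas_f hmeas u t).aestronglyMeasurable ?_
  filter_upwards [hge] with x hx
  exact abs_f_le hξu hu0 hx ht0 le_rfl le_rfl htT

lemma f_mono {A s t : ℝ} (hξu : ξ < u) (ha : ξ ≤ A) (hs : 0 < s) (hst : s ≤ t)
    (htT : t < u / (u - ξ)) :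
    (A - u) / (A * t - u * t + u) ≤ (A - u) / (A * s - u * s + u) := by
  have hdt : 0 < A * t - u * t + u := den_pos hξu ha (hs.trans_le hst) htT
  have hds : 0 < A * s - u * s + u := den_pos hξu ha hs (lt_of_le_of_lt hst htT)
  rw [div_le_div_iff₀ hdt hds]
  nlinarith [sq_nonneg (A - u), sub_nonneg.2 hst]

lemma f_strict_sub {A s t : ℝ} (hξu : ξ < u) (ha : ξ ≤ A) (hs : 0 < s) (hst : s < t)
    (htT : t < u / (u - ξ)) (hAu : A ≠ u) :
    0 < (A - u) / (A * s - u * s + u) - (A - u) / (A * t - u * t + u) := by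
  have hdt : 0 < A * t - u * t + u := den_pos hξu ha (hs.trans hst) htT
  have hds : 0 < A * s - u * s + u := den_pos hξu ha hs (hst.trans htT)
  have key : (A - u) / (A * s - u * s + u) - (A - u) / (A * t - u * t + u)
      = ((A - u) ^ 2 * (t - s)) / ((A * s - u * s + u) * (A * t - u * t + u)) := by
    rw [div_sub_div _ _ hds.ne' hdt.ne']; congr 1; ring
  rw [key]
  have h1 : 0 < (A - u) ^ 2 := by
    have : A - u ≠ 0 := sub_ne_zero.2 hAu
    positivity
  have h2 : 0 < t - s := by linarith
  positivity

lemma W_strict (hmeas : Measurable a) (hge : ∀ᵐ x ∂μ, ξ ≤ a x)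
    (hξu : ξ < u) (hu0 : 0 < u) (hne : 0 < μ {x | a x ≠ u})
    {s t : ℝ} (hs : 0 < s) (hst : s < t) (htT : t < u / (u - ξ)) :
    ∫ x, (a x - u) / (a x * t - u * t + u) ∂μ
      < ∫ x, (a x - u) / (a x * s - u * s + u) ∂μ := by
  have hIs := integrable_f hmeas hge hξu hu0 hs (hst.trans htT)
  have hIt := integrable_f hmeas hge hξu hu0 (hs.trans hst) htT
  rw [← sub_pos, ← integral_sub hIs hIt]
  set g := fun x => (a x - u) / (a x * s - u * s + u) - (a x - u) / (a x * t - u * t + u)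
    with hg
  have hnn : 0 ≤ᵐ[μ] g := by
    filter_upwards [hge] with x hx
    exact sub_nonneg.2 (f_mono hξu hx hs hst.le htT)
  rw [integral_pos_iff_support_of_nonneg_ae hnn (hIs.sub hIt)]
  have hsub : {x | a x ≠ u} ⊆ Function.support g ∪ {x | ¬ ξ ≤ a x} := by
    intro x hx
    by_cases hxx : ξ ≤ a x
    · exact Or.inl (ne_of_gt (f_strict_sub hξu hxx hs hst htT hx))
    · exact Or.inr hxx
  have h0 : μ {x | ¬ ξ ≤ a x} = 0 := by
    rw [ae_iff] at hge; simpa using hge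
  calc 0 < μ {x | a x ≠ u} := hne
    _ ≤ μ (Function.support g ∪ {x | ¬ ξ ≤ a x}) := measure_mono hsub
    _ ≤ μ (Function.support g) + μ {x | ¬ ξ ≤ a x} := measure_union_le _ _
    _ = μ (Function.support g) := by rw [h0, add_zero]

lemma W_contOn (hmeas : Measurable a) (hge : ∀ᵐ x ∂μ, ξ ≤ a x)
    (hξu : ξ < u) (hu0 : 0 < u) {t₁ t₂ : ℝ} (h1 : 0 < t₁) (h2 : t₂ < u / (u - ξ)) :
    ContinuousOn (fun t => ∫ x, (a x - u) / (a x * t - u * t + u) ∂μ) (Icc t₁ t₂) := by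
  intro t₀ ht₀
  have ht₀1 : 0 < t₀ := h1.trans_le ht₀.1
  have ht₀2 : t₀ < u / (u - ξ) := lt_of_le_of_lt ht₀.2 h2
  have key : Tendsto (fun t => ∫ x, (a x - u) / (a x * t - u * t + u) ∂μ)
      (nhdsWithin t₀ (Icc t₁ t₂)) (nhds (∫ x, (a x - u) / (a x * t₀ - u * t₀ + u) ∂μ)) := by
    refine tendsto_integral_filter_of_dominated_convergence
      (fun _ => max t₁⁻¹ ((u - ξ) / (u - t₂ * (u - ξ))))
      (Filter.Eventually.of_forall fun t => (meas_f hmeas u t).aestronglyMeasurable)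
      ?_ (integrable_const _) ?_
    · filter_upwards [eventually_mem_nhdsWithin] with t ht
      filter_upwards [hge] with x hx
      exact abs_f_le hξu hu0 hx h1 ht.1 ht.2 h2
    · filter_upwards [hge] with x hx
      have hden : a x * t₀ - u * t₀ + u ≠ 0 := (den_pos hξu hx ht₀1 ht₀2).ne'
      have hc : ContinuousAt (fun t => (a x - u) / (a x * t - u * t + u)) t₀ :=
        ContinuousAt.div continuousAt_const (by fun_prop) hden
      exact hc.tendsto.mono_left nhdsWithin_le_nhds
  exact key

-- pointwise bound for t near 0 (t ≤ T/2), valid for ξ ≤ a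
lemma abs_f_le0 {A t : ℝ} (hξu : ξ < u) (hu0 : 0 < u) (ha : ξ ≤ A)
    (ht0 : 0 < t) (ht : t ≤ u / (2 * (u - ξ))) :
    |(A - u) / (A * t - u * t + u)| ≤ |A - u| / u + 2 * (u - ξ) / u := by
  have hT2 : u / (2 * (u - ξ)) < u / (u - ξ) := by
    apply div_lt_div_of_pos_left hu0 (by linarith) (by linarith)
  have htT : t < u / (u - ξ) := lt_of_le_of_lt ht hT2
  have hden : 0 < A * t - u * t + u := den_pos hξu ha ht0 htT
  have hhalf : u / 2 ≤ A * t - u * t + u := by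
    have h2 : t * (u - ξ) ≤ u / 2 := by
      have := (le_div_iff₀ (show (0:ℝ) < 2 * (u - ξ) by linarith)).1 ht
      nlinarith
    have := (den_key hξu ha ht0 htT).2
    linarith
  rcases le_or_gt u A with h | h
  · have hf : (A - u) / (A * t - u * t + u) ≤ (A - u) / u := by
      apply div_le_div_of_nonneg_left (by linarith) hu0
      nlinarith [mul_nonneg (sub_nonneg.2 h) ht0.le]
    rw [abs_of_nonneg (div_nonneg (by linarith) hden.le)]
    have : (A - u) / u ≤ |A - u| / u := by gcongr; exact le_abs_self _
    have hK : 0 ≤ 2 * (u - ξ) / u := div_nonneg (by linarith) hu0.le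
    linarith
  · rw [abs_of_nonpos (div_nonpos_of_nonpos_of_nonneg (by linarith) hden.le), neg_div', neg_sub]
    have : (u - A) / (A * t - u * t + u) ≤ (u - ξ) / (u / 2) :=
      div_le_div₀ (by linarith) (by linarith) (by linarith) hhalf
    have h2 : (u - ξ) / (u / 2) = 2 * (u - ξ) / u := by
      field_simp
    have h3 : 0 ≤ |A - u| / u := by positivity
    linarith [this, h2 ▸ this]

lemma exists_pos_integrable (hmeas : Measurable a) (hge : ∀ᵐ x ∂μ, ξ ≤ a x)
    (hξu : ξ < u) (hu0 : 0 < u) (hint : Integrable a μ) (hE : u < ∫ x, a x ∂μ) :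
    ∃ t₁ ∈ Ioo (0:ℝ) (u / (u - ξ)), 0 < ∫ x, (a x - u) / (a x * t₁ - u * t₁ + u) ∂μ := by
  have hT0 : 0 < u / (u - ξ) := div_pos hu0 (by linarith)
  have hT'0 : 0 < u / (2 * (u - ξ)) := div_pos hu0 (by linarith)
  have hT2 : u / (2 * (u - ξ)) < u / (u - ξ) :=
    div_lt_div_of_pos_left hu0 (by linarith) (by linarith)
  have hlim : Tendsto (fun t => ∫ x, (a x - u) / (a x * t - u * t + u) ∂μ)
      (nhdsWithin 0 (Ioi 0)) (nhds (∫ x, (a x - u) / (a x * 0 - u * 0 + u) ∂μ)) := by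
    refine tendsto_integral_filter_of_dominated_convergence
      (fun x => |a x - u| / u + 2 * (u - ξ) / u)
      (Filter.Eventually.of_forall fun t => (meas_f hmeas u t).aestronglyMeasurable)
      ?_ ?_ ?_
    · filter_upwards [Ioc_mem_nhdsGT_of_mem ⟨le_rfl, hT'0⟩] with t ht
      filter_upwards [hge] with x hx
      exact abs_f_le0 hξu hu0 hx ht.1 ht.2
    · exact ((hint.sub (integrable_const u)).abs.div_const u).add (integrable_const _)
    · refine Filter.Eventually.of_forall fun x => ?_
      have hden : a x * 0 - u * 0 + u ≠ 0 := by simpa using hu0.ne'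
      have hc : ContinuousAt (fun t => (a x - u) / (a x * t - u * t + u)) 0 :=
        ContinuousAt.div continuousAt_const (by fun_prop) hden
      exact hc.tendsto.mono_left nhdsWithin_le_nhds
  have hval : ∫ x, (a x - u) / (a x * 0 - u * 0 + u) ∂μ = ((∫ x, a x ∂μ) - u) / u := by
    rw [show (fun x => (a x - u) / (a x * 0 - u * 0 + u)) = fun x => (a x - u) / u by
      funext x; norm_num]
    rw [integral_div, integral_sub hint (integrable_const u), integral_const]
    simp [measure_univ]
  rw [hval] at hlim
  have hpos : 0 < ((∫ x, a x ∂μ) - u) / u := by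
    apply div_pos (by linarith) hu0
  have hev : ∀ᶠ t in nhdsWithin 0 (Ioi 0),
      0 < ∫ x, (a x - u) / (a x * t - u * t + u) ∂μ :=
    hlim.eventually (eventually_gt_nhds hpos)
  have hev2 : ∀ᶠ t in nhdsWithin (0:ℝ) (Ioi 0), t ∈ Ioo (0:ℝ) (u / (u - ξ)) := by
    filter_upwards [Ioo_mem_nhdsGT_of_mem ⟨le_rfl, hT0⟩] with t ht
    exact ht
  obtain ⟨t₁, ht₁, ht₁'⟩ := (hev2.and hev).exists
  exact ⟨t₁, ht₁, ht₁'⟩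

lemma hT2' {ξ u : ℝ} (hξu : ξ < u) (hu0 : 0 < u) : u / (2 * (u - ξ)) < u / (u - ξ) :=
  div_lt_div_of_pos_left hu0 (by linarith) (by linarith)

lemma den_half {A ξ u t : ℝ} (hξu : ξ < u) (hu0 : 0 < u) (ha : ξ ≤ A)
    (ht0 : 0 < t) (ht : t ≤ u / (2 * (u - ξ))) : u / 2 ≤ A * t - u * t + u := by
  have htT : t < u / (u - ξ) := lt_of_le_of_lt ht (hT2' hξu hu0)
  have h2 : t * (u - ξ) ≤ u / 2 := by
    have := (le_div_iff₀ (show (0:ℝ) < 2 * (u - ξ) by linarith)).1 ht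
    nlinarith
  have := (den_key hξu ha ht0 htT).2
  linarith

lemma f_lb {A ξ u t N : ℝ} (hξu : ξ < u) (hu0 : 0 < u) (ha : ξ ≤ A) (ht0 : 0 < t)
    (ht : t ≤ u / (2 * (u - ξ))) (hN : 0 ≤ N) :
    min (A - u) N / (N * t + u) - 2 * (u - ξ) / u ≤ (A - u) / (A * t - u * t + u) := by
  have htT : t < u / (u - ξ) := lt_of_le_of_lt ht (hT2' hξu hu0)
  have hden : 0 < A * t - u * t + u := den_pos hξu ha ht0 htT
  have hhalf := den_half hξu hu0 ha ht0 ht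
  have hNtu : 0 < N * t + u := by positivity
  have hK : 0 ≤ 2 * (u - ξ) / u := div_nonneg (by linarith) hu0.le
  rcases le_or_gt u A with h | h
  · have key : min (A - u) N / (N * t + u) ≤ (A - u) / (A * t - u * t + u) := by
      rcases le_total (A - u) N with h2 | h2
      · rw [min_eq_left h2]
        apply div_le_div_of_nonneg_left (by linarith) hden
        nlinarith
      · rw [min_eq_right h2, div_le_div_iff₀ hNtu hden]
        nlinarith
    linarith
  · rw [min_eq_left (by linarith)]
    have h1 : (A - u) / (N * t + u) ≤ 0 :=
      div_nonpos_of_nonpos_of_nonneg (by linarith) hNtu.le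
    have h2 : (u - A) / (A * t - u * t + u) ≤ (u - ξ) / (u / 2) :=
      div_le_div₀ (by linarith) (by linarith) (by linarith) hhalf
    have h3 : (u - ξ) / (u / 2) = 2 * (u - ξ) / u := by field_simp
    have h4 : (A - u) / (A * t - u * t + u) = -((u - A) / (A * t - u * t + u)) := by
      rw [← neg_div, neg_sub]
    linarith [h3 ▸ h2]


lemma exists_pos_nonintegrable (hmeas : Measurable a) (hge : ∀ᵐ x ∂μ, ξ ≤ a x)
    (hξu : ξ < u) (hu0 : 0 < u) (hnint : ¬ Integrable a μ) :
    ∃ t₁ ∈ Ioo (0:ℝ) (u / (u - ξ)), 0 < ∫ x, (a x - u) / (a x * t₁ - u * t₁ + u) ∂μ := by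
  -- Step 1: the positive part of a - u has infinite lintegral
  have hlin : ∫⁻ x, ENNReal.ofReal (a x - u) ∂μ = ∞ := by
    by_contra h
    apply hnint
    refine ⟨hmeas.aestronglyMeasurable, ?_⟩
    rw [hasFiniteIntegral_iff_norm]
    calc ∫⁻ x, ENNReal.ofReal ‖a x‖ ∂μ
        ≤ ∫⁻ x, (ENNReal.ofReal (a x - u) + ENNReal.ofReal (|u| + |ξ|)) ∂μ := by
          refine lintegral_mono_ae ?_
          filter_upwards [hge] with x hx
          rcases le_or_gt u (a x) with h' | h'
          · rw [← ENNReal.ofReal_add (by linarith) (by positivity)]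
            apply ENNReal.ofReal_le_ofReal
            rw [Real.norm_eq_abs, abs_of_nonneg (by nlinarith [le_abs_self u, neg_abs_le ξ])]
            nlinarith [le_abs_self u, abs_nonneg ξ]
          · refine le_trans ?_ le_add_self
            apply ENNReal.ofReal_le_ofReal
            rw [Real.norm_eq_abs, abs_le]
            constructor
            · nlinarith [neg_abs_le ξ, abs_nonneg u]
            · nlinarith [le_abs_self u, abs_nonneg ξ]
      _ = (∫⁻ x, ENNReal.ofReal (a x - u) ∂μ) + ENNReal.ofReal (|u| + |ξ|) := by
          rw [lintegral_add_right _ measurable_const, lintegral_const]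
          simp [measure_univ]
      _ < ∞ := by
          rw [ENNReal.add_lt_top]
          exact ⟨lt_top_iff_ne_top.2 h, ENNReal.ofReal_lt_top⟩
  -- Step 2: truncations exceed any bound
  have hmeas_g : ∀ n : ℕ, Measurable (fun x => ENNReal.ofReal (min (a x - u) (n:ℝ))) :=
    fun n => ((hmeas.sub_const u).min measurable_const).ennreal_ofReal
  have hmono : Monotone (fun (n:ℕ) (x:Ω) => ENNReal.ofReal (min (a x - u) (n:ℝ))) := by
    intro n m hnm x
    exact ENNReal.ofReal_le_ofReal (min_le_min le_rfl (by exact_mod_cast hnm))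
  have hsup2 : (⨆ n : ℕ, ∫⁻ x, ENNReal.ofReal (min (a x - u) (n:ℝ)) ∂μ) = ∞ := by
    rw [← lintegral_iSup hmeas_g hmono]
    rw [← hlin]
    apply lintegral_congr
    intro x
    apply le_antisymm
    · exact iSup_le fun n => ENNReal.ofReal_le_ofReal (min_le_left _ _)
    · obtain ⟨n, hn⟩ := exists_nat_ge (a x - u)
      calc ENNReal.ofReal (a x - u) = ENNReal.ofReal (min (a x - u) (n:ℝ)) := by
            rw [min_eq_left hn]
        _ ≤ ⨆ n : ℕ, ENNReal.ofReal (min (a x - u) (n:ℝ)) :=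
            le_iSup (fun k : ℕ => ENNReal.ofReal (min (a x - u) (k:ℝ))) n
  obtain ⟨n, hn⟩ := lt_iSup_iff.1 (by
    rw [hsup2]; exact ENNReal.ofReal_lt_top :
    ENNReal.ofReal (5 * (u - ξ)) < ⨆ n : ℕ, ∫⁻ x, ENNReal.ofReal (min (a x - u) (n:ℝ)) ∂μ)
  set m : Ω → ℝ := fun x => min (a x - u) (n:ℝ) with hm
  have hmmeas : Measurable m := (hmeas.sub_const u).min measurable_const
  set Sn := ∫⁻ x, ENNReal.ofReal (m x) ∂μ with hSn
  have hSnne : Sn ≠ ∞ := by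
    refine ne_top_of_le_ne_top (b := ENNReal.ofReal (n:ℝ)) ENNReal.ofReal_ne_top ?_
    calc Sn ≤ ∫⁻ _x, ENNReal.ofReal (n:ℝ) ∂μ :=
          lintegral_mono fun x => ENNReal.ofReal_le_ofReal (min_le_right _ _)
      _ = ENNReal.ofReal (n:ℝ) := by rw [lintegral_const]; simp [measure_univ]
  have hSnlb : 5 * (u - ξ) < Sn.toReal := by
    have := ENNReal.toReal_strict_mono hSnne hn
    rwa [ENNReal.toReal_ofReal (by linarith)] at this
  -- Step 3: bound on ∫ m
  have hIm : Integrable m μ := by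
    refine Integrable.mono' (integrable_const (max (n:ℝ) (u - ξ)))
      hmmeas.aestronglyMeasurable ?_
    filter_upwards [hge] with x hx
    have hmx : m x = min (a x - u) (n:ℝ) := rfl
    rw [Real.norm_eq_abs, hmx]
    rcases le_or_gt u (a x) with h' | h'
    · rw [abs_of_nonneg (le_min (by linarith) (n.cast_nonneg))]
      exact le_trans (min_le_right _ _) (le_max_left _ _)
    · rw [min_eq_left (show a x - u ≤ (n:ℝ) by linarith [n.cast_nonneg (α := ℝ)]),
        abs_of_nonpos (by linarith)]
      exact le_trans (by linarith) (le_max_right _ _)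
  have hImax : Integrable (fun x => max (m x) 0) μ := by
    refine Integrable.mono' (integrable_const (n:ℝ))
      (hmmeas.max measurable_const).aestronglyMeasurable ?_
    refine Filter.Eventually.of_forall fun x => ?_
    rw [Real.norm_eq_abs, abs_of_nonneg (le_max_right _ _)]
    exact max_le (min_le_right _ _) (n.cast_nonneg)
  have hImin : Integrable (fun x => min (m x) 0) μ := by
    refine Integrable.mono' (integrable_const (u - ξ))
      (hmmeas.min measurable_const).aestronglyMeasurable ?_
    filter_upwards [hge] with x hx
    have hmx : m x = min (a x - u) (n:ℝ) := rfl
    rw [Real.norm_eq_abs, abs_of_nonpos (min_le_right _ _), hmx]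
    rcases le_or_gt u (a x) with h' | h'
    · rw [min_eq_right (le_min (by linarith) (n.cast_nonneg))]; linarith
    · rw [min_eq_left (show a x - u ≤ (n:ℝ) by linarith [n.cast_nonneg (α := ℝ)]),
        min_eq_left (by linarith)]
      linarith
  have hmaxint : ∫ x, max (m x) 0 ∂μ = Sn.toReal := by
    rw [integral_eq_lintegral_of_nonneg_ae (f := fun x => max (m x) 0)
      (Filter.Eventually.of_forall fun x => le_max_right (m x) 0)
      (hmmeas.max measurable_const).aestronglyMeasurable]
    congr 1
    apply lintegral_congr
    intro x
    rcases le_total 0 (m x) with h' | h'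
    · rw [max_eq_left h']
    · rw [max_eq_right h', ENNReal.ofReal_of_nonpos h', ENNReal.ofReal_zero]
  have hminlb : -(u - ξ) ≤ ∫ x, min (m x) 0 ∂μ := by
    have := integral_mono_ae (integrable_const (-(u - ξ))) hImin ?_
    · rwa [integral_const, probReal_univ, one_smul] at this
    · filter_upwards [hge] with x hx
      rcases le_or_gt u (a x) with h' | h'
      · refine le_min ?_ (by linarith)
        refine le_trans (by linarith) (le_min (by linarith) (n.cast_nonneg) : (0:ℝ) ≤ m x)
      · refine le_min ?_ (by linarith)
        have hmx : m x = min (a x - u) (n:ℝ) := rfl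
        rw [hmx, min_eq_left (show a x - u ≤ (n:ℝ) by linarith [n.cast_nonneg (α := ℝ)])]
        linarith
  have hS : 4 * (u - ξ) < ∫ x, m x ∂μ := by
    have hsplit : ∫ x, m x ∂μ = (∫ x, max (m x) 0 ∂μ) + ∫ x, min (m x) 0 ∂μ := by
      rw [← integral_add hImax hImin]
      apply integral_congr_ae
      refine Filter.Eventually.of_forall fun x => ?_
      show m x = max (m x) 0 + min (m x) 0
      rw [max_add_min, add_zero]
    rw [hsplit, hmaxint]
    linarith
  -- Step 4: choose t₁ and conclude
  set t₁ : ℝ := min (u / (2 * (u - ξ))) (u / ((n:ℝ) + 1)) with ht₁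
  have ht₁0 : 0 < t₁ := lt_min (div_pos hu0 (by linarith)) (by positivity)
  have ht₁T : t₁ < u / (u - ξ) := lt_of_le_of_lt (min_le_left _ _) (hT2' hξu hu0)
  have hnt : (n:ℝ) * t₁ + u ≤ 2 * u := by
    have h1 : (n:ℝ) * t₁ ≤ (n:ℝ) * (u / ((n:ℝ) + 1)) :=
      mul_le_mul_of_nonneg_left (min_le_right _ _) (n.cast_nonneg)
    have h2 : (n:ℝ) * (u / ((n:ℝ) + 1)) ≤ u := by
      rw [mul_div_assoc']
      rw [div_le_iff₀ (by positivity)]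
      nlinarith [n.cast_nonneg (α := ℝ)]
    linarith
  have hNtu : 0 < (n:ℝ) * t₁ + u := by positivity
  have hWlb : (∫ x, m x ∂μ) / ((n:ℝ) * t₁ + u) - 2 * (u - ξ) / u
      ≤ ∫ x, (a x - u) / (a x * t₁ - u * t₁ + u) ∂μ := by
    have hmono2 := integral_mono_ae ((hIm.div_const ((n:ℝ) * t₁ + u)).sub (integrable_const (2 * (u - ξ) / u)))
      (integrable_f hmeas hge hξu hu0 ht₁0 ht₁T) ?_
    · simp only [Pi.sub_apply] at hmono2
      rwa [integral_sub (hIm.div_const ((n:ℝ) * t₁ + u)) (integrable_const _), integral_div,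
        integral_const, probReal_univ, one_smul] at hmono2
    · filter_upwards [hge] with x hx
      exact f_lb hξu hu0 hx ht₁0 (min_le_left _ _) (n.cast_nonneg)
  refine ⟨t₁, ⟨ht₁0, ht₁T⟩, ?_⟩
  have hSpos : 0 < ∫ x, m x ∂μ := by linarith
  have h5 : (∫ x, m x ∂μ) / (2 * u) ≤ (∫ x, m x ∂μ) / ((n:ℝ) * t₁ + u) := by
    apply div_le_div_of_nonneg_left hSpos.le hNtu hnt
  have h6 : 4 * (u - ξ) / (2 * u) < (∫ x, m x ∂μ) / (2 * u) := by
    rw [div_lt_div_iff₀ (by positivity) (by positivity)]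
    nlinarith
  have h7 : 4 * (u - ξ) / (2 * u) = 2 * (u - ξ) / u := by
    field_simp; ring
  linarith

-- denominator bounds valid up to T, for ξ ≤ A
lemma den_ge {A ξ u t : ℝ} (hξu : ξ < u) (hu0 : 0 < u) (ha : ξ ≤ A) (ht0 : 0 < t)
    (htT : t ≤ u / (u - ξ)) :
    t * (A - ξ) ≤ A * t - u * t + u ∧ u - t * (u - ξ) ≤ A * t - u * t + u := by
  have h1 : t * (u - ξ) ≤ u := (le_div_iff₀ (show (0:ℝ) < u - ξ by linarith)).1 htT
  constructor
  · nlinarith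
  · nlinarith [mul_nonneg ht0.le (sub_nonneg.2 ha)]

lemma den_pos_T {A ξ u t : ℝ} (hξu : ξ < u) (hu0 : 0 < u) (ha : ξ < A) (ht0 : 0 < t)
    (htT : t ≤ u / (u - ξ)) : 0 < A * t - u * t + u := by
  have := (den_ge hξu hu0 ha.le ht0 htT).1
  nlinarith [mul_pos ht0 (sub_pos.2 ha)]

lemma f_le_inv {A u t : ℝ} (hu0 : 0 < u) (ht0 : 0 < t)
    (hden : 0 < A * t - u * t + u) : (A - u) / (A * t - u * t + u) ≤ t⁻¹ := by
  rw [div_le_iff₀ hden]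
  have h : t⁻¹ * t = 1 := inv_mul_cancel₀ ht0.ne'
  nlinarith [mul_pos (inv_pos.2 ht0) hu0]


lemma integrable_negpart (hmeas : Measurable a) (hge : ∀ᵐ x ∂μ, ξ ≤ a x)
    (hξu : ξ < u) (hu0 : 0 < u) {t : ℝ} (ht0 : 0 < t) (htT : t < u / (u - ξ)) :
    Integrable (fun x => max (-((a x - u) / (a x * t - u * t + u))) 0) μ := by
  refine Integrable.mono' (integrable_const (max t⁻¹ ((u - ξ) / (u - t * (u - ξ)))))
    (((meas_f hmeas u t).neg.max measurable_const).aestronglyMeasurable) ?_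
  filter_upwards [hge] with x hx
  rw [Real.norm_eq_abs, abs_of_nonneg (le_max_right _ _)]
  exact le_trans (max_le (neg_le_abs _) (abs_nonneg _))
    (abs_f_le hξu hu0 hx ht0 le_rfl le_rfl htT)

lemma W_split (hmeas : Measurable a) (hge : ∀ᵐ x ∂μ, ξ ≤ a x)
    (hξu : ξ < u) (hu0 : 0 < u) {t : ℝ} (ht0 : 0 < t) (htT : t < u / (u - ξ)) :
    ∫ x, (a x - u) / (a x * t - u * t + u) ∂μ
      ≤ t⁻¹ - ∫ x, max (-((a x - u) / (a x * t - u * t + u))) 0 ∂μ := by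
  have hIN := integrable_negpart hmeas hge hξu hu0 ht0 htT
  have hmono := integral_mono_ae (integrable_f hmeas hge hξu hu0 ht0 htT)
    ((integrable_const t⁻¹).sub hIN) ?_
  · simp only [Pi.sub_apply] at hmono
    rwa [integral_sub (integrable_const _) hIN, integral_const, probReal_univ,
      one_smul] at hmono
  · filter_upwards [hge] with x hx
    simp only [Pi.sub_apply]
    have hden := den_pos hξu hx ht0 htT
    have h1 := f_le_inv hu0 ht0 hden
    rcases le_or_gt u (a x) with h' | h'
    · have : max (-((a x - u) / (a x * t - u * t + u))) 0 = 0 :=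
        max_eq_right (neg_nonpos.2 (div_nonneg (by linarith) hden.le))
      rw [this]; simpa using h1
    · have h2 : (0:ℝ) < t⁻¹ := inv_pos.2 ht0
      rcases max_cases (-((a x - u) / (a x * t - u * t + u))) 0 with ⟨he, _⟩ | ⟨he, _⟩ <;>
        rw [he] <;> nlinarith [div_nonneg (show (0:ℝ) ≤ u - a x by linarith) hden.le,
          div_nonpos_of_nonpos_of_nonneg (show a x - u ≤ 0 by linarith) hden.le]

-- Case: atom at ξ
lemma exists_neg_atom (hmeas : Measurable a) (hge : ∀ᵐ x ∂μ, ξ ≤ a x)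
    (hξu : ξ < u) (hu0 : 0 < u) (hp : 0 < μ {x | a x = ξ}) :
    ∃ t₂ ∈ Ioo (0:ℝ) (u / (u - ξ)), ∫ x, (a x - u) / (a x * t₂ - u * t₂ + u) ∂μ < 0 := by
  set T := u / (u - ξ) with hT
  have hT0 : 0 < T := div_pos hu0 (by linarith)
  set p : ℝ := (μ {x | a x = ξ}).toReal with hpdef
  have hmeasS : MeasurableSet {x | a x = ξ} := hmeas (measurableSet_singleton ξ)
  have hp' : 0 < p := ENNReal.toReal_pos hp.ne' (measure_ne_top μ _)
  set K : ℝ := 2 * (u - ξ) / u + 1 with hK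
  have hKpos : 0 < K := by
    rw [hK]
    have : 0 ≤ 2 * (u - ξ) / u := div_nonneg (by linarith) hu0.le
    linarith
  set δ : ℝ := min (u / 2) (p * (u - ξ) / K) with hδ
  have hδ0 : 0 < δ := lt_min (by linarith) (div_pos (mul_pos hp' (by linarith)) hKpos)
  set t : ℝ := (u - δ) / (u - ξ) with ht
  have hδu : δ ≤ u / 2 := min_le_left _ _
  have ht0 : 0 < t := div_pos (by linarith) (by linarith)
  have htT : t < T := by
    rw [ht, hT, div_lt_div_iff₀ (by linarith) (by linarith)]
    nlinarith
  have htTge : T / 2 ≤ t := by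
    rw [show T / 2 = (u / 2) / (u - ξ) by rw [hT]; ring, ht,
      div_le_div_iff_of_pos_right (by linarith)]
    linarith
  have hden_atom : u - t * (u - ξ) = δ := by
    rw [ht, div_mul_cancel₀ _ (show u - ξ ≠ 0 by intro h; linarith)]
    ring
  have hNlb : p * (u - ξ) / δ ≤ ∫ x, max (-((a x - u) / (a x * t - u * t + u))) 0 ∂μ := by
    have hind : Integrable ({x | a x = ξ}.indicator (fun _ => (u - ξ) / δ)) μ :=
      (integrable_const ((u - ξ) / δ)).indicator hmeasS
    have hmono := integral_mono_ae hind (integrable_negpart hmeas hge hξu hu0 ht0 htT) ?_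
    · rwa [integral_indicator_const _ hmeasS, smul_eq_mul, measureReal_def, ← hpdef,
        show p * ((u - ξ) / δ) = p * (u - ξ) / δ by ring] at hmono
    · filter_upwards [hge] with x hx
      by_cases hxS : x ∈ {x | a x = ξ}
      · rw [indicator_of_mem hxS]
        have hax : a x = ξ := hxS
        have hd : a x * t - u * t + u = δ := by rw [hax]; linarith [hden_atom]
        rw [hd, hax]
        have hneg : -((ξ - u) / δ) = (u - ξ) / δ := by rw [← neg_div, neg_sub]
        rw [hneg, max_eq_left (div_nonneg (by linarith) hδ0.le)]
      · rw [indicator_of_notMem hxS]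
        exact le_max_right _ _
  refine ⟨t, ⟨ht0, htT⟩, ?_⟩
  have hsplit := W_split hmeas hge hξu hu0 ht0 htT
  have hNbig : K ≤ p * (u - ξ) / δ := by
    rw [le_div_iff₀ hδ0]
    have := min_le_right (u / 2) (p * (u - ξ) / K)
    calc K * δ ≤ K * (p * (u - ξ) / K) := by
          apply mul_le_mul_of_nonneg_left (min_le_right _ _) hKpos.le
      _ = p * (u - ξ) := by field_simp
  have htinv : t⁻¹ ≤ 2 * (u - ξ) / u := by
    have h1 : t⁻¹ ≤ (T / 2)⁻¹ := inv_anti₀ (by linarith) htTge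
    have h2 : (T / 2)⁻¹ = 2 * (u - ξ) / u := by
      rw [hT]
      rw [div_div]
      rw [inv_div]
      ring
    linarith
  linarith [hNlb, hNbig]

-- pointwise bound near T : for T/2 ≤ t ≤ T and ξ < A
lemma abs_f_leT {A ξ u t : ℝ} (hξu : ξ < u) (hu0 : 0 < u) (ha : ξ < A)
    (ht1 : u / (u - ξ) / 2 ≤ t) (ht2 : t ≤ u / (u - ξ)) :
    |(A - u) / (A * t - u * t + u)|
      ≤ 2 * (u - ξ) / u + (2 * (u - ξ) ^ 2 / u) * (A - ξ)⁻¹ := by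
  have hT0 : 0 < u / (u - ξ) := div_pos hu0 (by linarith)
  have ht0 : 0 < t := by linarith
  have hden : 0 < A * t - u * t + u := den_pos_T hξu hu0 ha ht0 ht2
  have hinv2 : (0:ℝ) ≤ (2 * (u - ξ) ^ 2 / u) * (A - ξ)⁻¹ := by
    apply mul_nonneg (by positivity)
    exact inv_nonneg.2 (by linarith)
  have htinv : t⁻¹ ≤ 2 * (u - ξ) / u := by
    have h1 : t⁻¹ ≤ (u / (u - ξ) / 2)⁻¹ := inv_anti₀ (by linarith) ht1
    have h2 : (u / (u - ξ) / 2)⁻¹ = 2 * (u - ξ) / u := by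
      rw [div_div, inv_div]; ring
    linarith
  rcases le_or_gt u A with h | h
  · rw [abs_of_nonneg (div_nonneg (by linarith) hden.le)]
    have := f_le_inv hu0 ht0 hden
    linarith
  · rw [abs_of_nonpos (div_nonpos_of_nonpos_of_nonneg (by linarith) hden.le), neg_div',
      neg_sub]
    have hAξ : 0 < A - ξ := by linarith
    have hd2 : t * (A - ξ) ≤ A * t - u * t + u := (den_ge hξu hu0 ha.le ht0 ht2).1
    have hd3 : 0 < t * (A - ξ) := mul_pos ht0 hAξ
    have key : (u - A) / (A * t - u * t + u) ≤ (u - ξ) / (t * (A - ξ)) :=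
      div_le_div₀ (by linarith) (by linarith) hd3 hd2
    have key2 : (u - ξ) / (t * (A - ξ)) ≤ (u - ξ) / (u / (u - ξ) / 2 * (A - ξ)) := by
      apply div_le_div_of_nonneg_left (by linarith) (by positivity)
      apply mul_le_mul_of_nonneg_right ht1 hAξ.le
    have key3 : (u - ξ) / (u / (u - ξ) / 2 * (A - ξ)) = (2 * (u - ξ) ^ 2 / u) * (A - ξ)⁻¹ := by
      field_simp
    have h0 : (0:ℝ) ≤ 2 * (u - ξ) / u := div_nonneg (by linarith) hu0.le
    linarith [key3 ▸ key2]


-- Case: no atom and finite H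
lemma exists_neg_finite (hmeas : Measurable a) (hge : ∀ᵐ x ∂μ, ξ ≤ a x)
    (hξu : ξ < u) (hu0 : 0 < u) (hna : μ {x | a x = ξ} = 0)
    (hL : (∫⁻ x, ENNReal.ofReal ((a x - ξ)⁻¹) ∂μ) ≠ ⊤)
    (hu : ξ + (∫⁻ x, ENNReal.ofReal ((a x - ξ)⁻¹) ∂μ)⁻¹.toReal < u) :
    ∃ t₂ ∈ Ioo (0:ℝ) (u / (u - ξ)), ∫ x, (a x - u) / (a x * t₂ - u * t₂ + u) ∂μ < 0 := by
  set T := u / (u - ξ) with hTdef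
  have hT0 : 0 < T := div_pos hu0 (by linarith)
  have hTν : T * (u - ξ) = u := div_mul_cancel₀ u (show u - ξ ≠ 0 by intro h; linarith)
  set L := ∫⁻ x, ENNReal.ofReal ((a x - ξ)⁻¹) ∂μ with hLdef
  have hgt : ∀ᵐ x ∂μ, ξ < a x := by
    have h1 : ∀ᵐ x ∂μ, ¬ (a x = ξ) := by
      rw [ae_iff]; simpa using hna
    filter_upwards [hge, h1] with x h2 h3
    exact lt_of_le_of_ne h2 (Ne.symm h3)
  have hmeasinv : Measurable (fun x => (a x - ξ)⁻¹) := (hmeas.sub_const ξ).inv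
  have hIinv : Integrable (fun x => (a x - ξ)⁻¹) μ := by
    refine ⟨hmeasinv.aestronglyMeasurable, ?_⟩
    rw [hasFiniteIntegral_iff_norm]
    have : (∫⁻ x, ENNReal.ofReal ‖(a x - ξ)⁻¹‖ ∂μ) = L := by
      rw [hLdef]
      apply lintegral_congr_ae
      filter_upwards [hgt] with x hx
      rw [Real.norm_eq_abs, abs_of_nonneg (inv_nonneg.2 (by linarith))]
    rw [this]
    exact lt_top_iff_ne_top.2 hL
  set H := ∫ x, (a x - ξ)⁻¹ ∂μ with hHdef
  have hHL : ENNReal.ofReal H = L := by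
    rw [hHdef, hLdef]
    apply ofReal_integral_eq_lintegral_ofReal hIinv
    filter_upwards [hgt] with x hx
    exact inv_nonneg.2 (by linarith)
  have hL0 : L ≠ 0 := by
    intro h0
    rw [hLdef, lintegral_eq_zero_iff hmeasinv.ennreal_ofReal] at h0
    have hfalse : ∀ᵐ x ∂μ, False := by
      filter_upwards [hgt, h0] with x h1 h2
      simp only [Pi.zero_apply, ENNReal.ofReal_eq_zero] at h2
      have : 0 < (a x - ξ)⁻¹ := inv_pos.2 (by linarith)
      linarith
    haveI : (ae μ).NeBot := IsProbabilityMeasure.ae_neBot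
    obtain ⟨x, hx⟩ := hfalse.exists
    exact hx
  have hH0 : 0 < H := by
    by_contra hcon
    push_neg at hcon
    exact hL0 (by rw [← hHL, ENNReal.ofReal_eq_zero.2 hcon])
  have hkey : 1 < (u - ξ) * H := by
    have h1 : (L⁻¹).toReal = H⁻¹ := by
      rw [ENNReal.toReal_inv, ← hHL, ENNReal.toReal_ofReal hH0.le]
    rw [h1] at hu
    have h2 : H⁻¹ < u - ξ := by linarith
    have := mul_lt_mul_of_pos_right h2 hH0
    rwa [inv_mul_cancel₀ hH0.ne'] at this
  -- value at T
  have hWT : ∫ x, (a x - u) / (a x * T - u * T + u) ∂μ = T⁻¹ * (1 - (u - ξ) * H) := by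
    have hcong : ∀ᵐ x ∂μ, (a x - u) / (a x * T - u * T + u)
        = T⁻¹ * (1 - (u - ξ) * (a x - ξ)⁻¹) := by
      filter_upwards [hgt] with x hx
      have hne : a x - ξ ≠ 0 := by intro h; simp only [sub_eq_zero] at h; exact hx.ne' h
      have hd : a x * T - u * T + u = T * (a x - ξ) := by
        linear_combination -hTν
      have e1 : (a x - u) * (a x - ξ)⁻¹ = 1 - (u - ξ) * (a x - ξ)⁻¹ := by
        have h2 : (a x - ξ) * (a x - ξ)⁻¹ = 1 := mul_inv_cancel₀ hne
        linear_combination h2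
      rw [hd, ← e1, div_eq_mul_inv, mul_inv]
      ring
    rw [integral_congr_ae hcong, integral_const_mul, integral_sub (integrable_const 1)
      (hIinv.const_mul (u - ξ)), integral_const, integral_const_mul]
    simp [measure_univ, hHdef]
  have hWTneg : ∫ x, (a x - u) / (a x * T - u * T + u) ∂μ < 0 := by
    rw [hWT]
    apply mul_neg_of_pos_of_neg (inv_pos.2 hT0)
    linarith
  -- continuity from the left at T
  have hlim : Tendsto (fun t => ∫ x, (a x - u) / (a x * t - u * t + u) ∂μ)
      (nhdsWithin T (Iio T)) (nhds (∫ x, (a x - u) / (a x * T - u * T + u) ∂μ)) := by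
    refine tendsto_integral_filter_of_dominated_convergence
      (fun x => 2 * (u - ξ) / u + (2 * (u - ξ) ^ 2 / u) * (a x - ξ)⁻¹)
      (Filter.Eventually.of_forall fun t => (meas_f hmeas u t).aestronglyMeasurable)
      ?_ ?_ ?_
    · filter_upwards [Ico_mem_nhdsLT_of_mem (show T ∈ Ioc (T/2) T by
        constructor <;> [linarith; exact le_rfl])] with t ht
      filter_upwards [hgt] with x hx
      exact abs_f_leT hξu hu0 hx ht.1 ht.2.le
    · exact (integrable_const _).add (hIinv.const_mul _)
    · filter_upwards [hgt] with x hx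
      have hden : a x * T - u * T + u ≠ 0 := (den_pos_T hξu hu0 hx hT0 le_rfl).ne'
      have hc : ContinuousAt (fun t => (a x - u) / (a x * t - u * t + u)) T :=
        ContinuousAt.div continuousAt_const (by fun_prop) hden
      exact hc.tendsto.mono_left nhdsWithin_le_nhds
  have hev : ∀ᶠ t in nhdsWithin T (Iio T),
      ∫ x, (a x - u) / (a x * t - u * t + u) ∂μ < 0 :=
    hlim.eventually (eventually_lt_nhds hWTneg)
  have hev2 : ∀ᶠ t in nhdsWithin T (Iio T), t ∈ Ioo (0:ℝ) T := by
    filter_upwards [Ioo_mem_nhdsLT_of_mem (show T ∈ Ioc (0:ℝ) T by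
      constructor <;> [exact hT0; exact le_rfl])] with t ht
    exact ht
  obtain ⟨t₂, ht₂, ht₂'⟩ := (hev2.and hev).exists
  exact ⟨t₂, ht₂, ht₂'⟩

lemma exists_neg_infinite (hmeas : Measurable a) (hge : ∀ᵐ x ∂μ, ξ ≤ a x)
    (hξu : ξ < u) (hu0 : 0 < u) (hna : μ {x | a x = ξ} = 0)
    (hL : (∫⁻ x, ENNReal.ofReal ((a x - ξ)⁻¹) ∂μ) = ⊤) :
    ∃ t₂ ∈ Ioo (0:ℝ) (u / (u - ξ)), ∫ x, (a x - u) / (a x * t₂ - u * t₂ + u) ∂μ < 0 := by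
  set T := u / (u - ξ) with hTdef
  have hT0 : 0 < T := div_pos hu0 (by linarith)
  have hTν : T * (u - ξ) = u := div_mul_cancel₀ u (show u - ξ ≠ 0 by intro h; linarith)
  have hgt : ∀ᵐ x ∂μ, ξ < a x := by
    have h1 : ∀ᵐ x ∂μ, ¬ (a x = ξ) := by
      rw [ae_iff]; simpa using hna
    filter_upwards [hge, h1] with x h2 h3
    exact lt_of_le_of_ne h2 (Ne.symm h3)
  set m0 : ℝ := (ξ + u) / 2 with hm0
  have hm0ξ : ξ < m0 := by rw [hm0]; linarith
  have hm0u : m0 < u := by rw [hm0]; linarith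
  set S : Set Ω := {x | ξ < a x ∧ a x ≤ m0} with hSdef
  have hSmeas : MeasurableSet S :=
    (measurableSet_lt measurable_const hmeas).inter (measurableSet_le hmeas measurable_const)
  have hmeasinv : Measurable (fun x => ENNReal.ofReal ((a x - ξ)⁻¹)) :=
    (hmeas.sub_const ξ).inv.ennreal_ofReal
  -- Step A : infinite mass of 1/(a-ξ) concentrated on S
  have hIS : ∫⁻ x, S.indicator (fun x => ENNReal.ofReal ((a x - ξ)⁻¹)) x ∂μ = ⊤ := by
    by_contra hcon
    have hbound : ∀ᵐ x ∂μ, ENNReal.ofReal ((a x - ξ)⁻¹)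
        ≤ S.indicator (fun x => ENNReal.ofReal ((a x - ξ)⁻¹)) x
          + ENNReal.ofReal ((m0 - ξ)⁻¹) := by
      filter_upwards [hgt] with x hx
      by_cases hxS : x ∈ S
      · rw [indicator_of_mem hxS]; exact le_self_add
      · rw [indicator_of_notMem hxS]
        have hxm : m0 < a x := by
          by_contra hc
          push_neg at hc
          exact hxS ⟨hx, hc⟩
        rw [zero_add]
        apply ENNReal.ofReal_le_ofReal
        apply inv_anti₀ (by linarith) (by linarith)
    have hle : (∫⁻ x, ENNReal.ofReal ((a x - ξ)⁻¹) ∂μ)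
        ≤ (∫⁻ x, S.indicator (fun x => ENNReal.ofReal ((a x - ξ)⁻¹)) x ∂μ)
          + ENNReal.ofReal ((m0 - ξ)⁻¹) := by
      calc (∫⁻ x, ENNReal.ofReal ((a x - ξ)⁻¹) ∂μ)
          ≤ ∫⁻ x, (S.indicator (fun x => ENNReal.ofReal ((a x - ξ)⁻¹)) x
              + ENNReal.ofReal ((m0 - ξ)⁻¹)) ∂μ := lintegral_mono_ae hbound
        _ = _ := by
            rw [lintegral_add_right _ measurable_const, lintegral_const]
            simp [measure_univ]
    rw [hL, top_le_iff] at hle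
    exact (ENNReal.add_ne_top.2 ⟨hcon, ENNReal.ofReal_ne_top⟩) hle
  -- Step B : the sequence tₙ ↑ T
  set tn : ℕ → ℝ := fun n => T - T / 2 * (1 / ((n:ℝ) + 1)) with htn
  have htn_lb : ∀ n, T / 2 ≤ tn n := by
    intro n
    rw [htn]
    simp only []
    have h1 : 1 / ((n:ℝ) + 1) ≤ 1 := by
      rw [div_le_one (by positivity)]
      linarith [n.cast_nonneg (α := ℝ)]
    nlinarith
  have htn_lt : ∀ n, tn n < T := by
    intro n
    rw [htn]
    simp only []
    have h1 : 0 < 1 / ((n:ℝ) + 1) := by positivity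
    nlinarith
  have htn_pos : ∀ n, 0 < tn n := fun n => lt_of_lt_of_le (by linarith) (htn_lb n)
  have htn_mono : Monotone tn := by
    intro n m hnm
    rw [htn]
    simp only []
    have h1 : 1 / ((m:ℝ) + 1) ≤ 1 / ((n:ℝ) + 1) := by
      apply div_le_div_of_nonneg_left one_pos.le (by positivity)
      exact_mod_cast Nat.succ_le_succ hnm
    nlinarith
  have htn_tendsto : Tendsto tn atTop (nhds T) := by
    rw [htn]
    have h1 : Tendsto (fun n : ℕ => T / 2 * (1 / ((n:ℝ) + 1))) atTop (nhds 0) := by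
      have := tendsto_one_div_add_atTop_nhds_zero_nat.const_mul (T / 2)
      simpa using this
    simpa using tendsto_const_nhds.sub h1
  -- Step C : monotone sequence of truncated negative parts
  set g : ℕ → Ω → ℝ≥0∞ := fun n x =>
    S.indicator (fun x => ENNReal.ofReal ((u - a x) / (a x * tn n - u * tn n + u))) x with hg
  have hgmeas : ∀ n, Measurable (g n) := by
    intro n
    exact (((measurable_const.sub hmeas).div
      (((hmeas.mul_const (tn n)).sub measurable_const).add measurable_const)).ennreal_ofReal).indicator hSmeas
  have hgmono : Monotone g := by
    intro n m hnm x
    rw [hg]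
    simp only []
    by_cases hxS : x ∈ S
    · rw [indicator_of_mem hxS, indicator_of_mem hxS]
      have hx1 : ξ < a x := hxS.1
      have hx2 : a x ≤ m0 := hxS.2
      apply ENNReal.ofReal_le_ofReal
      have hdm : 0 < a x * tn m - u * tn m + u :=
        den_pos_T hξu hu0 hx1 (htn_pos m) (htn_lt m).le
      apply div_le_div_of_nonneg_left (by linarith) hdm
      nlinarith [htn_mono hnm]
    · rw [indicator_of_notMem hxS, indicator_of_notMem hxS]
  -- Step D : the supremum of lintegrals is infinite
  have hsupg : (⨆ n, ∫⁻ x, g n x ∂μ) = ⊤ := by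
    rw [← lintegral_iSup hgmeas hgmono]
    set c : ℝ := (u - m0) / T with hc
    have hc0 : 0 < c := div_pos (by linarith) hT0
    refine top_le_iff.1 ?_
    calc (⊤ : ℝ≥0∞) = ENNReal.ofReal c
          * ∫⁻ x, S.indicator (fun x => ENNReal.ofReal ((a x - ξ)⁻¹)) x ∂μ := by
          rw [hIS, ENNReal.mul_top (by simp [ENNReal.ofReal_eq_zero]; linarith)]
      _ = ∫⁻ x, ENNReal.ofReal c
            * S.indicator (fun x => ENNReal.ofReal ((a x - ξ)⁻¹)) x ∂μ := by
          rw [lintegral_const_mul _ (hmeasinv.indicator hSmeas)]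
      _ ≤ ∫⁻ x, ⨆ n, g n x ∂μ := by
          apply lintegral_mono
          intro x
          dsimp only
          by_cases hxS : x ∈ S
          · rw [indicator_of_mem hxS]
            have hx1 : ξ < a x := hxS.1
            have hx2 : a x ≤ m0 := hxS.2
            have hne : a x - ξ ≠ 0 := by intro h; simp only [sub_eq_zero] at h; exact hx1.ne' h
            have hdenT : 0 < a x * T - u * T + u := den_pos_T hξu hu0 hx1 hT0 le_rfl
            -- the limit value dominates c * (a x - ξ)⁻¹
            have hval : ENNReal.ofReal c * ENNReal.ofReal ((a x - ξ)⁻¹)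
                ≤ ENNReal.ofReal ((u - a x) / (a x * T - u * T + u)) := by
              rw [← ENNReal.ofReal_mul hc0.le]
              apply ENNReal.ofReal_le_ofReal
              have hdT : a x * T - u * T + u = T * (a x - ξ) := by
                linear_combination -hTν
              rw [hdT, hc, ← div_eq_mul_inv, div_div]
              apply div_le_div₀ (by linarith) (by linarith)
                (mul_pos hT0 (by linarith)) le_rfl
            refine le_trans hval ?_
            -- the limit is ≤ the supremum
            have htend : Tendsto (fun n => g n x) atTop
                (nhds (ENNReal.ofReal ((u - a x) / (a x * T - u * T + u)))) := by
              have hreal : Tendsto (fun n => (u - a x) / (a x * tn n - u * tn n + u)) atTop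
                  (nhds ((u - a x) / (a x * T - u * T + u))) := by
                have hcont : ContinuousAt (fun t => (u - a x) / (a x * t - u * t + u)) T :=
                  ContinuousAt.div continuousAt_const (by fun_prop) hdenT.ne'
                exact hcont.tendsto.comp htn_tendsto
              have := (ENNReal.continuous_ofReal.tendsto _).comp hreal
              refine this.congr fun k => ?_
              show ENNReal.ofReal ((u - a x) / (a x * tn k - u * tn k + u)) = g k x
              rw [hg]
              dsimp only
              rw [indicator_of_mem hxS]
            exact le_of_tendsto' htend fun n => le_iSup (fun k => g k x) n
          · rw [indicator_of_notMem hxS, mul_zero]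
            exact zero_le
  -- Step E : pick n
  have hKlt : ENNReal.ofReal (2 * (u - ξ) / u + 1) < ⨆ n, ∫⁻ x, g n x ∂μ := by
    rw [hsupg]; exact ENNReal.ofReal_lt_top
  obtain ⟨n, hn⟩ := lt_iSup_iff.1 hKlt
  -- Step F : conclude
  set t := tn n with htdef
  have ht0 : 0 < t := htn_pos n
  have htT : t < T := htn_lt n
  have hIN := integrable_negpart hmeas hge hξu hu0 ht0 htT
  have hsplit := W_split hmeas hge hξu hu0 ht0 htT
  have hlin_le : ∫⁻ x, g n x ∂μ
      ≤ ∫⁻ x, ENNReal.ofReal (max (-((a x - u) / (a x * t - u * t + u))) 0) ∂μ := by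
    apply lintegral_mono_ae
    filter_upwards [hge] with x hx
    by_cases hxS : x ∈ S
    · have hx1 : ξ < a x := hxS.1
      have hx2 : a x ≤ m0 := hxS.2
      have hden : 0 < a x * t - u * t + u := den_pos hξu hx ht0 htT
      rw [hg]
      simp only []
      rw [indicator_of_mem hxS]
      apply ENNReal.ofReal_le_ofReal
      have : -((a x - u) / (a x * t - u * t + u)) = (u - a x) / (a x * t - u * t + u) := by
        rw [← neg_div, neg_sub]
      rw [max_eq_left (by rw [this]; exact div_nonneg (by linarith) hden.le), this]
    · rw [hg]
      simp only []
      rw [indicator_of_notMem hxS]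
      exact zero_le
  have hfin : (∫⁻ x, ENNReal.ofReal (max (-((a x - u) / (a x * t - u * t + u))) 0) ∂μ) ≠ ⊤ := by
    have h2 := (hasFiniteIntegral_iff_norm _).1 hIN.2
    have h3 : (∫⁻ x, ENNReal.ofReal ‖max (-((a x - u) / (a x * t - u * t + u))) 0‖ ∂μ)
        = ∫⁻ x, ENNReal.ofReal (max (-((a x - u) / (a x * t - u * t + u))) 0) ∂μ := by
      apply lintegral_congr
      intro x
      rw [Real.norm_eq_abs, abs_of_nonneg (le_max_right _ _)]
    rw [h3] at h2
    exact h2.ne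
  have hNval : ∫ x, max (-((a x - u) / (a x * t - u * t + u))) 0 ∂μ
      = (∫⁻ x, ENNReal.ofReal (max (-((a x - u) / (a x * t - u * t + u))) 0) ∂μ).toReal := by
    apply integral_eq_lintegral_of_nonneg_ae
      (Filter.Eventually.of_forall fun x => le_max_right _ _)
      ((meas_f hmeas u t).neg.max measurable_const).aestronglyMeasurable
  have hNlb : 2 * (u - ξ) / u + 1 < ∫ x, max (-((a x - u) / (a x * t - u * t + u))) 0 ∂μ := by
    rw [hNval]
    have h1 := ENNReal.toReal_strict_mono hfin (lt_of_lt_of_le hn hlin_le)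
    have hnn : (0:ℝ) ≤ 2 * (u - ξ) / u + 1 := by
      have : (0:ℝ) ≤ 2 * (u - ξ) / u := div_nonneg (by linarith) hu0.le
      linarith
    rwa [ENNReal.toReal_ofReal hnn] at h1
  have htinv : t⁻¹ ≤ 2 * (u - ξ) / u := by
    have h1 : t⁻¹ ≤ (T / 2)⁻¹ := inv_anti₀ (by linarith) (htn_lb n)
    have h2 : (T / 2)⁻¹ = 2 * (u - ξ) / u := by
      rw [hTdef, div_div, inv_div]; ring
    linarith
  exact ⟨t, ⟨ht0, htT⟩, by linarith⟩

lemma ane_pos (huE : u < ∫ x, a x ∂μ ∨ ¬ Integrable a μ) : 0 < μ {x | a x ≠ u} := by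
  by_contra h
  push_neg at h
  have h0 : μ {x | a x ≠ u} = 0 := le_antisymm h (zero_le)
  have hae : a =ᵐ[μ] (fun _ => u) := by
    rw [Filter.EventuallyEq, ae_iff]
    simpa using h0
  have hint : Integrable a μ := (integrable_congr hae).2 (integrable_const u)
  have hval : ∫ x, a x ∂μ = u := by
    rw [integral_congr_ae hae]; simp
  rcases huE with h1 | h2
  · rw [hval] at h1; exact lt_irrefl _ h1
  · exact h2 hint

end Stmt5Aux

/-- If `max(0, ξ + 1/H_ξ) < u < E` (with the convention `1/H_ξ = 0` when
`H_ξ = ∫ 1/(a-ξ) dF = +∞`), then `w_u(t) = ∫ (a-u)/(a t - u t + u) dF = 0`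
has a unique solution in `(0, u/(u-ξ))`. -/
theorem stmt5 {Ω : Type*} [MeasurableSpace Ω] (μ : Measure Ω) [IsProbabilityMeasure μ]
    (a : Ω → ℝ) (hmeas : Measurable a) (ξ : ℝ)
    (hge : ∀ᵐ x ∂μ, ξ ≤ a x)
    (hinf : ∀ ε > 0, 0 < μ {x | a x < ξ + ε})
    (hnc : ∃ δ > 0, μ {x | a x < ξ + δ} < 1)
    (u : ℝ)
    (hu : max 0 (ξ + (∫⁻ x, ENNReal.ofReal ((a x - ξ)⁻¹) ∂μ)⁻¹.toReal) < u)
    (huE : u < ∫ x, a x ∂μ ∨ ¬ Integrable a μ) :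
    ∃! t : ℝ, t ∈ Ioo 0 (u / (u - ξ)) ∧
      ∫ x, (a x - u) / (a x * t - u * t + u) ∂μ = 0 := by
  have hu0 : 0 < u := lt_of_le_of_lt (le_max_left _ _) hu
  have huL : ξ + (∫⁻ x, ENNReal.ofReal ((a x - ξ)⁻¹) ∂μ)⁻¹.toReal < u :=
    lt_of_le_of_lt (le_max_right _ _) hu
  have hξu : ξ < u := lt_of_le_of_lt (le_add_of_nonneg_right ENNReal.toReal_nonneg) huL
  set T := u / (u - ξ) with hTdef
  have hT0 : 0 < T := div_pos hu0 (by linarith)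
  have hne : 0 < μ {x | a x ≠ u} := ane_pos huE
  -- a positive point
  obtain ⟨t₁, ht₁mem, ht₁pos⟩ : ∃ t₁ ∈ Ioo (0:ℝ) T,
      0 < ∫ x, (a x - u) / (a x * t₁ - u * t₁ + u) ∂μ := by
    by_cases hint : Integrable a μ
    · rcases huE with h1 | h2
      · exact exists_pos_integrable hmeas hge hξu hu0 hint h1
      · exact absurd hint h2
    · exact exists_pos_nonintegrable hmeas hge hξu hu0 hint
  -- a negative point
  obtain ⟨t₂, ht₂mem, ht₂neg⟩ : ∃ t₂ ∈ Ioo (0:ℝ) T,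
      ∫ x, (a x - u) / (a x * t₂ - u * t₂ + u) ∂μ < 0 := by
    by_cases hatom : μ {x | a x = ξ} = 0
    · by_cases hLtop : (∫⁻ x, ENNReal.ofReal ((a x - ξ)⁻¹) ∂μ) = ⊤
      · exact exists_neg_infinite hmeas hge hξu hu0 hatom hLtop
      · exact exists_neg_finite hmeas hge hξu hu0 hatom hLtop huL
    · exact exists_neg_atom hmeas hge hξu hu0 (pos_iff_ne_zero.2 hatom)
  have ht₁₂ : t₁ < t₂ := by
    by_contra hcon
    push_neg at hcon
    rcases eq_or_lt_of_le hcon with heq | hlt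
    · rw [heq] at ht₂neg; linarith
    · have := W_strict hmeas hge hξu hu0 hne ht₂mem.1 hlt ht₁mem.2
      linarith
  have hcont : ContinuousOn (fun t => ∫ x, (a x - u) / (a x * t - u * t + u) ∂μ)
      (Icc t₁ t₂) := W_contOn hmeas hge hξu hu0 ht₁mem.1 ht₂mem.2
  have hsub := intermediate_value_Icc' ht₁₂.le hcont
  have h0mem : (0:ℝ) ∈ Icc (∫ x, (a x - u) / (a x * t₂ - u * t₂ + u) ∂μ)
      (∫ x, (a x - u) / (a x * t₁ - u * t₁ + u) ∂μ) := ⟨ht₂neg.le, ht₁pos.le⟩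
  obtain ⟨t, htmem, htW'⟩ := hsub h0mem
  have htW : ∫ x, (a x - u) / (a x * t - u * t + u) ∂μ = 0 := htW'
  have htIoo : t ∈ Ioo (0:ℝ) T :=
    ⟨lt_of_lt_of_le ht₁mem.1 htmem.1, lt_of_le_of_lt htmem.2 ht₂mem.2⟩
  refine ⟨t, ⟨htIoo, htW⟩, ?_⟩
  rintro y ⟨hyIoo, hyW⟩
  by_contra hyne
  rcases lt_or_gt_of_ne hyne with hlt | hlt
  · have := W_strict hmeas hge hξu hu0 hne hyIoo.1 hlt htIoo.2
    rw [htW, hyW] at this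
    exact lt_irrefl _ this
  · have := W_strict hmeas hge hξu hu0 hne htIoo.1 hlt hyIoo.2
    rw [htW, hyW] at this
    exact lt_irrefl _ this
end

section
/- Suppose ξ ≥ 0 and max(0, ξ+1/H_ξ) < u < E, and let t̃_u ∈ (0, u/(u-ξ)) be the unique solution of ∫ (a-u)/(a t̃_u - u t̃_u + u) dF = 0. Then t̃_u is strictly decreasing as a function of u on (ξ+1/H_ξ, E). -/
open MeasureTheory Real Filter Set

private lemma integ_aux {Ω : Type*} [MeasurableSpace Ω] (μ : Measure Ω) [IsProbabilityMeasure μ]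
    {a : Ω → ℝ} (hmeas : Measurable a) {u t c : ℝ} (hc : 0 < c) (ht : 0 < t)
    (hD : ∀ᵐ x ∂μ, c ≤ a x * t - u * t + u) :
    Integrable (fun x => (a x - u) / (a x * t - u * t + u)) μ := by
  apply Integrable.mono' (integrable_const (1/t + |u| / (t*c)))
  · exact ((hmeas.sub_const u).div
      (((hmeas.mul_const t).sub_const (u*t)).add_const u)).aestronglyMeasurable
  · filter_upwards [hD] with x hx
    have hDpos : 0 < a x * t - u * t + u := hc.trans_le hx
    have hkey : (a x - u) / (a x * t - u * t + u)
        = 1/t - u / (t * (a x * t - u * t + u)) := by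
      have hDne : a x * t - u * t + u ≠ 0 := hDpos.ne'
      rw [eq_sub_iff_add_eq, div_add_div _ _ hDne (mul_ne_zero ht.ne' hDne), div_eq_div_iff (mul_ne_zero hDne (mul_ne_zero ht.ne' hDne)) ht.ne']
      ring
    rw [hkey]
    have h1 : |u / (t * (a x * t - u * t + u))| ≤ |u| / (t*c) := by
      rw [abs_div, abs_of_pos (mul_pos ht hDpos)]
      exact div_le_div_of_nonneg_left (abs_nonneg u) (mul_pos ht hc)
        (by nlinarith)
    calc |1/t - u / (t * (a x * t - u * t + u))|
        ≤ |1/t| + |u / (t * (a x * t - u * t + u))| := abs_sub _ _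
      _ ≤ 1/t + |u| / (t*c) := by
          rw [abs_of_pos (by positivity)]; linarith

set_option maxHeartbeats 1000000 in
/-- Suppose `ξ ≥ 0`, and let `T u = t̃_u ∈ (0, u/(u-ξ))` be the unique zero of
`w_u(t) = ∫ (a-u)/(a t - u t + u) dF` for `u` with
`max(0, ξ + 1/H_ξ) < u < E`. Then `u ↦ t̃_u` is strictly decreasing there. -/
theorem stmt7 {Ω : Type*} [MeasurableSpace Ω] (μ : Measure Ω) [IsProbabilityMeasure μ]
    (a : Ω → ℝ) (hmeas : Measurable a) (ξ : ℝ) (hξ0 : 0 ≤ ξ)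
    (hge : ∀ᵐ x ∂μ, ξ ≤ a x)
    (hinf : ∀ ε > 0, 0 < μ {x | a x < ξ + ε})
    (hnc : ∃ δ > 0, μ {x | a x < ξ + δ} < 1)
    (T : ℝ → ℝ)
    (hT : ∀ u,
      max 0 (ξ + (∫⁻ x, ENNReal.ofReal ((a x - ξ)⁻¹) ∂μ)⁻¹.toReal) < u →
      (u < ∫ x, a x ∂μ ∨ ¬ Integrable a μ) →
      T u ∈ Ioo 0 (u / (u - ξ)) ∧
        ∫ x, (a x - u) / (a x * T u - u * T u + u) ∂μ = 0) :
    StrictAntiOn T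
      {u : ℝ | max 0 (ξ + (∫⁻ x, ENNReal.ofReal ((a x - ξ)⁻¹) ∂μ)⁻¹.toReal) < u ∧
        (u < ∫ x, a x ∂μ ∨ ¬ Integrable a μ)} := by
  intro u₁ hu₁ u₂ hu₂ h12
  obtain ⟨hu₁m, hu₁E⟩ := hu₁
  obtain ⟨hu₂m, hu₂E⟩ := hu₂
  obtain ⟨⟨ht₁0, ht₁lt⟩, hw₁⟩ := hT u₁ hu₁m hu₁E
  obtain ⟨⟨ht₂0, ht₂lt⟩, hw₂⟩ := hT u₂ hu₂m hu₂E
  set t₁ := T u₁ with ht₁def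
  set t₂ := T u₂ with ht₂def
  have hBnn : (0:ℝ) ≤ (∫⁻ x, ENNReal.ofReal ((a x - ξ)⁻¹) ∂μ)⁻¹.toReal :=
    ENNReal.toReal_nonneg
  have hξu₁ : ξ < u₁ := by have := (max_lt_iff.mp hu₁m).2; linarith
  have hξu₂ : ξ < u₂ := by have := (max_lt_iff.mp hu₂m).2; linarith
  have hu₁0 : 0 < u₁ := (max_lt_iff.mp hu₁m).1
  have hu₂0 : 0 < u₂ := (max_lt_iff.mp hu₂m).1
  -- t₂ < u₁/(u₁ - ξ)
  have hbd : u₂ / (u₂ - ξ) ≤ u₁ / (u₁ - ξ) := by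
    rw [div_le_div_iff₀ (by linarith) (by linarith)]
    nlinarith
  have ht₂lt₁ : t₂ < u₁ / (u₁ - ξ) := lt_of_lt_of_le ht₂lt hbd
  by_contra hcon
  push_neg at hcon
  -- hcon : t₁ ≤ t₂
  set c₀ := (ξ - u₁) * t₁ + u₁ with hc₀def
  set c₁ := (ξ - u₁) * t₂ + u₁ with hc₁def
  set c₂ := (ξ - u₂) * t₂ + u₂ with hc₂def
  have hc₀ : 0 < c₀ := by
    have := (lt_div_iff₀ (by linarith : (0:ℝ) < u₁ - ξ)).mp ht₁lt
    nlinarith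
  have hc₁ : 0 < c₁ := by
    have := (lt_div_iff₀ (by linarith : (0:ℝ) < u₁ - ξ)).mp ht₂lt₁
    nlinarith
  have hc₂ : 0 < c₂ := by
    have := (lt_div_iff₀ (by linarith : (0:ℝ) < u₂ - ξ)).mp ht₂lt
    nlinarith
  have hD₀ : ∀ᵐ x ∂μ, c₀ ≤ a x * t₁ - u₁ * t₁ + u₁ := by
    filter_upwards [hge] with x hx; nlinarith
  have hD₁ : ∀ᵐ x ∂μ, c₁ ≤ a x * t₂ - u₁ * t₂ + u₁ := by
    filter_upwards [hge] with x hx; nlinarith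
  have hD₂ : ∀ᵐ x ∂μ, c₂ ≤ a x * t₂ - u₂ * t₂ + u₂ := by
    filter_upwards [hge] with x hx; nlinarith
  have I₀ : Integrable (fun x => (a x - u₁) / (a x * t₁ - u₁ * t₁ + u₁)) μ :=
    integ_aux μ hmeas hc₀ ht₁0 hD₀
  have I₁ : Integrable (fun x => (a x - u₁) / (a x * t₂ - u₁ * t₂ + u₁)) μ :=
    integ_aux μ hmeas hc₁ ht₂0 hD₁
  have I₂ : Integrable (fun x => (a x - u₂) / (a x * t₂ - u₂ * t₂ + u₂)) μ :=
    integ_aux μ hmeas hc₂ ht₂0 hD₂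
  -- u-monotonicity: f(u₂,t₂) ≤ f(u₁,t₂) pointwise a.e.
  have hle1 : ∀ᵐ x ∂μ, (a x - u₂) / (a x * t₂ - u₂ * t₂ + u₂)
      ≤ (a x - u₁) / (a x * t₂ - u₁ * t₂ + u₁) := by
    filter_upwards [hD₁, hD₂, hge] with x h1 h2 hx
    rw [div_le_div_iff₀ (hc₂.trans_le h2) (hc₁.trans_le h1)]
    nlinarith [mul_nonneg (show (0:ℝ) ≤ a x by linarith)
      (show (0:ℝ) ≤ u₂ - u₁ by linarith)]
  -- t-monotonicity: f(u₁,t₂) ≤ f(u₁,t₁) pointwise a.e.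
  have hle2 : ∀ᵐ x ∂μ, (a x - u₁) / (a x * t₂ - u₁ * t₂ + u₁)
      ≤ (a x - u₁) / (a x * t₁ - u₁ * t₁ + u₁) := by
    filter_upwards [hD₀, hD₁, hge] with x h0 h1 hx
    rw [div_le_div_iff₀ (hc₁.trans_le h1) (hc₀.trans_le h0)]
    nlinarith [mul_nonneg (sq_nonneg (a x - u₁)) (sub_nonneg.mpr hcon)]
  have hI1 : ∫ x, (a x - u₁) / (a x * t₂ - u₁ * t₂ + u₁) ∂μ = 0 := by
    have hA : ∫ x, (a x - u₁) / (a x * t₂ - u₁ * t₂ + u₁) ∂μ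
        ≤ ∫ x, (a x - u₁) / (a x * t₁ - u₁ * t₁ + u₁) ∂μ :=
      integral_mono_ae I₁ I₀ hle2
    have hB : ∫ x, (a x - u₂) / (a x * t₂ - u₂ * t₂ + u₂) ∂μ
        ≤ ∫ x, (a x - u₁) / (a x * t₂ - u₁ * t₂ + u₁) ∂μ :=
      integral_mono_ae I₂ I₁ hle1
    rw [hw₁] at hA
    rw [hw₂] at hB
    linarith
  -- the difference integrates to 0, is nonneg a.e., hence is 0 a.e.
  have hsub : ∫ x, ((a x - u₁) / (a x * t₂ - u₁ * t₂ + u₁)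
      - (a x - u₂) / (a x * t₂ - u₂ * t₂ + u₂)) ∂μ = 0 := by
    rw [integral_sub I₁ I₂, hI1, hw₂]; ring
  have hnn : 0 ≤ᵐ[μ] fun x => (a x - u₁) / (a x * t₂ - u₁ * t₂ + u₁)
      - (a x - u₂) / (a x * t₂ - u₂ * t₂ + u₂) := by
    filter_upwards [hle1] with x h
    simp only [Pi.zero_apply]
    linarith
  have hzero : (fun x => (a x - u₁) / (a x * t₂ - u₁ * t₂ + u₁)
      - (a x - u₂) / (a x * t₂ - u₂ * t₂ + u₂)) =ᵐ[μ] 0 :=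
    (integral_eq_zero_iff_of_nonneg_ae hnn (I₁.sub I₂)).mp hsub
  have ha0 : ∀ᵐ x ∂μ, a x = 0 := by
    filter_upwards [hzero, hD₁, hD₂, hge] with x hz h1 h2 hx
    have hp1 : 0 < a x * t₂ - u₁ * t₂ + u₁ := hc₁.trans_le h1
    have hp2 : 0 < a x * t₂ - u₂ * t₂ + u₂ := hc₂.trans_le h2
    simp only [Pi.zero_apply] at hz
    have hz' : (a x - u₁) / (a x * t₂ - u₁ * t₂ + u₁)
        = (a x - u₂) / (a x * t₂ - u₂ * t₂ + u₂) := by linarith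
    rw [div_eq_div_iff hp1.ne' hp2.ne'] at hz'
    have key : a x * (u₂ - u₁) = 0 := by linear_combination hz'
    exact (mul_eq_zero.mp key).resolve_right
      (sub_ne_zero.mpr (ne_of_gt h12))
  -- contradiction with hnc
  obtain ⟨δ, hδ, hδ1⟩ := hnc
  have hSm : MeasurableSet {x | a x < ξ + δ} := hmeas measurableSet_Iio
  have hsubset : {x | a x < ξ + δ}ᶜ ⊆ {x | ¬ a x = 0} := by
    intro x hx
    simp only [mem_compl_iff, mem_setOf_eq, not_lt] at hx
    simp only [mem_setOf_eq]
    intro h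
    rw [h] at hx
    linarith
  have h0 : μ {x | ¬ a x = 0} = 0 := ae_iff.mp ha0
  have hcompl : μ {x | a x < ξ + δ}ᶜ = 0 :=
    le_antisymm (h0 ▸ measure_mono hsubset) (zero_le)
  have hone : (1:ENNReal) ≤ μ {x | a x < ξ + δ} := by
    have h := prob_compl_eq_one_sub (μ := μ) hSm
    rw [hcompl, eq_comm, tsub_eq_zero_iff_le] at h
    exact h
  exact absurd hδ1 (not_lt.mpr hone)
end

section
/- Let a be measurable with essential infimum ξ ≤ 0, and suppose max(0, ξ+1/H_ξ) < u < E. Let t̃_u be the unique zero of w_u in (0, u/(u-ξ)). Then t̃_u < F({x : a(x) ≠ 0}), i.e., t̃_u is strictly less than the probability that a(x) ≠ 0. -/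
open MeasureTheory Real Filter Set

/-- If `ξ ≤ 0` and `max(0, ξ+1/H_ξ) < u < E`, the unique zero `t̃_u` of `w_u`
in `(0, u/(u-ξ))` satisfies `t̃_u < F({x : a(x) ≠ 0})`. -/
theorem stmt9 {Ω : Type*} [MeasurableSpace Ω] (μ : Measure Ω) [IsProbabilityMeasure μ]
    (a : Ω → ℝ) (hmeas : Measurable a) (ξ : ℝ) (hξ0 : ξ ≤ 0)
    (hge : ∀ᵐ x ∂μ, ξ ≤ a x)
    (hinf : ∀ ε > 0, 0 < μ {x | a x < ξ + ε})
    (hnc : ∃ δ > 0, μ {x | a x < ξ + δ} < 1)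
    (u : ℝ)
    (hu : max 0 (ξ + (∫⁻ x, ENNReal.ofReal ((a x - ξ)⁻¹) ∂μ)⁻¹.toReal) < u)
    (huE : u < ∫ x, a x ∂μ ∨ ¬ Integrable a μ)
    (tu : ℝ) (htu : tu ∈ Ioo 0 (u / (u - ξ)))
    (hzero : ∫ x, (a x - u) / (a x * tu - u * tu + u) ∂μ = 0) :
    tu < (μ {x | a x ≠ 0}).toReal := by
  obtain ⟨htu0, htu1⟩ := htu
  have hu0 : 0 < u := lt_of_le_of_lt (le_max_left _ _) hu
  have hξu : ξ < u := lt_of_le_of_lt hξ0 hu0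
  have huξ : 0 < u - ξ := by linarith
  have htum : tu * (u - ξ) < u := by
    rw [lt_div_iff₀ huξ] at htu1; linarith
  have hε0 : 0 < u - tu * (u - ξ) := by linarith
  have htu1' : tu < 1 := lt_of_lt_of_le htu1 (by rw [div_le_one huξ]; linarith)
  have h1tu : 0 < 1 - tu := by linarith
  set D : Ω → ℝ := fun x => a x * tu - u * tu + u with hD
  set g : Ω → ℝ := fun x => (a x - u) / D x with hg
  set h : Ω → ℝ := fun x => if a x = 0 then -(1 - tu)⁻¹ else tu⁻¹ with hh
  have hDae : ∀ᵐ x ∂μ, u - tu * (u - ξ) ≤ D x := by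
    filter_upwards [hge] with x hx
    simp only [hD]
    nlinarith
  have hDmeas : Measurable D :=
    ((hmeas.mul measurable_const).sub measurable_const).add measurable_const
  have hgmeas : Measurable g := (hmeas.sub measurable_const).div hDmeas
  have hhmeas : Measurable h :=
    Measurable.ite (hmeas (measurableSet_singleton 0)) measurable_const measurable_const
  -- pointwise decomposition
  have hdecomp : ∀ x, 0 < D x → g x = tu⁻¹ - (u / tu) / D x := by
    intro x hDx
    simp only [hg, hD] at *
    rw [eq_comm, eq_div_iff hDx.ne', sub_mul, div_mul_cancel₀ _ hDx.ne', div_eq_mul_inv]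
    linear_combination (a x - u) * mul_inv_cancel₀ htu0.ne'
  have hkey : ∀ᵐ x ∂μ, g x ≤ h x ∧ (a x ≠ 0 → g x < h x) := by
    filter_upwards [hDae] with x hx
    have hDx : 0 < D x := lt_of_lt_of_le hε0 hx
    by_cases h0 : a x = 0
    · have hDx' : D x = u * (1 - tu) := by simp [hD, h0]; ring
      have : g x = -(1 - tu)⁻¹ := by
        simp only [hg, h0, hDx']
        rw [zero_sub, div_eq_iff (by positivity)]
        field_simp
      simp [hh, h0, this]
    · have hgx : g x = tu⁻¹ - (u / tu) / D x := hdecomp x hDx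
      have hpos : 0 < (u / tu) / D x := div_pos (div_pos hu0 htu0) hDx
      have : g x < tu⁻¹ := by rw [hgx]; linarith
      simp only [hh, h0, if_neg h0]
      exact ⟨this.le, fun _ => this⟩
  -- integrability
  have hgbd : ∀ᵐ x ∂μ, ‖g x‖ ≤ tu⁻¹ + (u / tu) / (u - tu * (u - ξ)) := by
    filter_upwards [hDae] with x hx
    have hDx : 0 < D x := lt_of_lt_of_le hε0 hx
    rw [hdecomp x hDx]
    have h1 : 0 < (u / tu) / D x := div_pos (div_pos hu0 htu0) hDx
    have h2 : (u / tu) / D x ≤ (u / tu) / (u - tu * (u - ξ)) :=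
      div_le_div_of_nonneg_left (div_pos hu0 htu0).le hε0 hx
    rw [Real.norm_eq_abs, abs_le]
    constructor <;> [nlinarith [inv_pos.mpr htu0]; nlinarith [inv_pos.mpr htu0]]
  have hgint : Integrable g μ :=
    ⟨hgmeas.aestronglyMeasurable, HasFiniteIntegral.of_bounded hgbd⟩
  have hhbd : ∀ᵐ x ∂μ, ‖h x‖ ≤ tu⁻¹ + (1 - tu)⁻¹ := by
    refine ae_of_all _ fun x => ?_
    have i1 : 0 < tu⁻¹ := inv_pos.mpr htu0
    have i2 : 0 < (1 - tu)⁻¹ := inv_pos.mpr h1tu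
    by_cases h0 : a x = 0 <;>
      simp [hh, h0, Real.norm_eq_abs, abs_of_pos htu0, abs_of_pos h1tu] <;> linarith
  have hhint : Integrable h μ :=
    ⟨hhmeas.aestronglyMeasurable, HasFiniteIntegral.of_bounded hhbd⟩
  -- the set
  set s : Set Ω := {x | a x = 0} with hs
  have hsm : MeasurableSet s := hmeas (measurableSet_singleton 0)
  have hscompl : sᶜ = {x | a x ≠ 0} := rfl
  -- value of ∫ h
  have hints : ∫ x in s, h x ∂μ = (μ s).toReal * (-(1 - tu)⁻¹) := by
    rw [setIntegral_congr_fun hsm (g := fun _ => -(1 - tu)⁻¹) (fun x hx => by simp only [hh, if_pos (show a x = 0 from hx)]),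
      setIntegral_const, smul_eq_mul, measureReal_def]
  have hintsc : ∫ x in sᶜ, h x ∂μ = (μ sᶜ).toReal * tu⁻¹ := by
    rw [setIntegral_congr_fun hsm.compl (g := fun _ => tu⁻¹)
      (fun x hx => by simp only [hh, if_neg (show ¬ a x = 0 from hx)]), setIntegral_const, smul_eq_mul, measureReal_def]
  have hinth : ∫ x, h x ∂μ = (μ s).toReal * (-(1 - tu)⁻¹) + (μ sᶜ).toReal * tu⁻¹ := by
    rw [← integral_add_compl hsm hhint, hints, hintsc]
  have hsum : (μ s).toReal + (μ sᶜ).toReal = 1 := by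
    rw [← ENNReal.toReal_add (measure_ne_top μ s) (measure_ne_top μ sᶜ),
      measure_add_measure_compl hsm, measure_univ, ENNReal.toReal_one]
  rcases eq_or_lt_of_le (zero_le : 0 ≤ μ sᶜ) with hP | hP
  · -- a = 0 a.e., contradiction with hzero
    exfalso
    have hae : ∀ᵐ x ∂μ, a x = 0 := by
      rw [← compl_compl {x | a x = 0}] at *
      exact (ae_iff).mpr (by simpa [hs, Set.compl_setOf] using hP.symm)
    have : ∫ x, g x ∂μ = -(1 - tu)⁻¹ := by
      rw [integral_congr_ae (g := fun _ => -(1 - tu)⁻¹) ?_, integral_const, measureReal_def, measure_univ]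
      · simp
      · filter_upwards [hae] with x hx
        simp only [hg, hD, hx]
        rw [zero_sub, zero_mul, zero_sub, div_eq_iff (by nlinarith)]
        field_simp
        ring
    rw [hzero] at this
    have : 0 < (1 - tu)⁻¹ := inv_pos.mpr h1tu
    linarith
  · -- strict inequality
    have hpos : 0 < ∫ x, (h x - g x) ∂μ := by
      have hint : Integrable (fun x => h x - g x) μ := hhint.sub hgint
      have hnn : 0 ≤ᵐ[μ] fun x => h x - g x := by
        filter_upwards [hkey] with x hx
        simp [sub_nonneg, hx.1]
      rw [integral_pos_iff_support_of_nonneg_ae hnn hint]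
      refine lt_of_lt_of_le hP (measure_mono_ae ?_)
      filter_upwards [hkey] with x hx hxs
      show h x - g x ≠ 0
      exact sub_ne_zero.mpr (hx.2 hxs).ne'
    rw [integral_sub hhint hgint, hzero, sub_zero, hinth] at hpos
    -- algebra
    set P : ℝ := (μ sᶜ).toReal with hPdef
    set Q : ℝ := (μ s).toReal with hQdef
    have hQ : Q = 1 - P := by linarith
    rw [hscompl] at hPdef
    show tu < P
    have e : tu * (1 - tu) * (Q * -(1 - tu)⁻¹ + P * tu⁻¹) = (1 - tu) * P - tu * Q := by
      field_simp
      ring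
    have hkey2 := mul_pos (mul_pos htu0 h1tu) hpos
    rw [e] at hkey2
    nlinarith [hkey2, hQ]
end

section
/- The following are equivalent: (1) ∫_{a(x)>1} log a(x) dF(x) < +∞; (2) G̃_u(t) = exp(∫ log(a t/u - t + 1) dF) < +∞ for every u ∈ (max(0,ξ), E) and t ∈ (0, u/(u-ξ)); (3) G̃_{u₁}(t₁) < +∞ for some such u₁, t₁. -/
open MeasureTheory Real Filter Set


private lemma stmt13_key {Ω : Type*} [MeasurableSpace Ω] (μ : Measure Ω)
    [IsProbabilityMeasure μ] (a : Ω → ℝ) (hmeas : Measurable a) (ξ : ℝ)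
    (hge : ∀ᵐ x ∂μ, ξ ≤ a x) (u t : ℝ) (hu : max 0 ξ < u)
    (ht : t ∈ Ioo 0 (u / (u - ξ))) :
    (∫⁻ x, ENNReal.ofReal (Real.log (a x * t / u - t + 1)) ∂μ < ⊤) ↔
      (∫⁻ x in {x | 1 < a x}, ENNReal.ofReal (Real.log (a x)) ∂μ < ⊤) := by
  have hu0 : (0:ℝ) < u := lt_of_le_of_lt (le_max_left _ _) hu
  have huξ : ξ < u := lt_of_le_of_lt (le_max_right _ _) hu
  have ht0 : (0:ℝ) < t := ht.1
  have hc : (0:ℝ) < t / u := div_pos ht0 hu0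
  set m : ℝ := ξ * t / u - t + 1 with hm_def
  have hm : 0 < m := by
    have h1 : t * (u - ξ) < u := by
      have := (lt_div_iff₀ (by linarith : 0 < u - ξ)).mp ht.2
      linarith
    rw [hm_def]
    have : ξ * t / u - t + 1 = (u - t * (u - ξ)) / u := by field_simp; ring
    rw [this]
    exact div_pos (by linarith) hu0
  have harg : ∀ x, ξ ≤ a x → m ≤ a x * t / u - t + 1 := by
    intro x hx
    have : ξ * t / u ≤ a x * t / u := by
      gcongr
    linarith
  have hS : MeasurableSet {x | 1 < a x} := measurableSet_lt measurable_const hmeas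
  constructor
  · -- finiteness of ∫ log arg ⊤ implies set-integral finite
    intro hfin
    set C : ℝ := max 0 (Real.log ((1 + |1 - t| / m) * (u / t))) with hC_def
    have hptwise : ∀ᵐ x ∂μ, {x | 1 < a x}.indicator
        (fun x => ENNReal.ofReal (Real.log (a x))) x ≤
        ENNReal.ofReal (Real.log (a x * t / u - t + 1)) + ENNReal.ofReal C := by
      filter_upwards [hge] with x hx
      by_cases hx1 : 1 < a x
      · rw [Set.indicator_of_mem (show x ∈ {z : Ω | 1 < a z} from hx1) (fun y : Ω => ENNReal.ofReal (Real.log (a y)))]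
        have hma : m ≤ a x * t / u - t + 1 := harg x hx
        set g : ℝ := a x * t / u - t + 1 with hg_def
        have hg0 : 0 < g := lt_of_lt_of_le hm hma
        have hK : (0:ℝ) < 1 + |1 - t| / m := by positivity
        have hbound : a x ≤ g * ((1 + |1 - t| / m) * (u / t)) := by
          have h1 : a x * (t / u) ≤ g + |1 - t| := by
            have : -(1 - t) ≤ |1 - t| := neg_le_abs _
            have hx2 : a x * (t / u) = a x * t / u := by ring
            rw [hx2]; rw [hg_def]; linarith
          have h2 : |1 - t| ≤ (|1 - t| / m) * g := by
            calc |1 - t| = (|1 - t| / m) * m := by field_simp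
            _ ≤ (|1 - t| / m) * g := by
              apply mul_le_mul_of_nonneg_left hma (by positivity)
          have h3 : a x * (t / u) ≤ g * (1 + |1 - t| / m) := by nlinarith
          have h4 := mul_le_mul_of_nonneg_right h3 (le_of_lt (div_pos hu0 ht0))
          calc a x = a x * (t / u) * (u / t) := by field_simp
          _ ≤ g * (1 + |1 - t| / m) * (u / t) := h4
          _ = g * ((1 + |1 - t| / m) * (u / t)) := by ring
        have hlog : Real.log (a x) ≤ Real.log g + C := by
          calc Real.log (a x) ≤ Real.log (g * ((1 + |1 - t| / m) * (u / t))) :=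
                Real.log_le_log (by linarith) hbound
          _ = Real.log g + Real.log ((1 + |1 - t| / m) * (u / t)) := by
                rw [Real.log_mul (ne_of_gt hg0) (by positivity)]
          _ ≤ Real.log g + C := by
                exact add_le_add (le_refl _) (le_max_right _ _)
        calc ENNReal.ofReal (Real.log (a x)) ≤ ENNReal.ofReal (Real.log g + C) :=
              ENNReal.ofReal_le_ofReal hlog
        _ ≤ ENNReal.ofReal (Real.log g) + ENNReal.ofReal C := ENNReal.ofReal_add_le
      · rw [Set.indicator_of_notMem (fun h : x ∈ {z | 1 < a z} => hx1 h) (fun y : Ω => ENNReal.ofReal (Real.log (a y)))]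
        exact zero_le
    calc ∫⁻ x in {x | 1 < a x}, ENNReal.ofReal (Real.log (a x)) ∂μ
        = ∫⁻ x, {x | 1 < a x}.indicator
            (fun x => ENNReal.ofReal (Real.log (a x))) x ∂μ :=
          (lintegral_indicator hS _).symm
      _ ≤ ∫⁻ x, (ENNReal.ofReal (Real.log (a x * t / u - t + 1))
            + ENNReal.ofReal C) ∂μ := lintegral_mono_ae hptwise
      _ = (∫⁻ x, ENNReal.ofReal (Real.log (a x * t / u - t + 1)) ∂μ)
            + ENNReal.ofReal C := by
          rw [lintegral_add_right _ measurable_const, lintegral_const, measure_univ,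
            mul_one]
      _ < ⊤ := ENNReal.add_lt_top.mpr ⟨hfin, ENNReal.ofReal_lt_top⟩
  · intro hfin
    set D : ℝ := Real.log (t / u + 1) with hD_def
    have hptwise : ∀ᵐ x ∂μ, ENNReal.ofReal (Real.log (a x * t / u - t + 1)) ≤
        {x | 1 < a x}.indicator (fun x => ENNReal.ofReal (Real.log (a x))) x
          + ENNReal.ofReal D := by
      filter_upwards [hge] with x hx
      have hma : m ≤ a x * t / u - t + 1 := harg x hx
      set g : ℝ := a x * t / u - t + 1 with hg_def
      have hg0 : 0 < g := lt_of_lt_of_le hm hma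
      by_cases hx1 : 1 < a x
      · rw [Set.indicator_of_mem (show x ∈ {z : Ω | 1 < a z} from hx1) (fun y : Ω => ENNReal.ofReal (Real.log (a y)))]
        have hbound : g ≤ a x * (t / u + 1) := by
          have : a x * t / u = a x * (t / u) := by ring
          rw [hg_def, this]; nlinarith
        have hlog : Real.log g ≤ Real.log (a x) + D := by
          calc Real.log g ≤ Real.log (a x * (t / u + 1)) :=
                Real.log_le_log hg0 hbound
          _ = Real.log (a x) + D := by
                rw [Real.log_mul (by linarith) (by positivity), hD_def]
        calc ENNReal.ofReal (Real.log g) ≤ ENNReal.ofReal (Real.log (a x) + D) :=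
              ENNReal.ofReal_le_ofReal hlog
        _ ≤ ENNReal.ofReal (Real.log (a x)) + ENNReal.ofReal D := ENNReal.ofReal_add_le
      · rw [Set.indicator_of_notMem (fun h : x ∈ {z | 1 < a z} => hx1 h) (fun y : Ω => ENNReal.ofReal (Real.log (a y)))]
        have hbound : g ≤ t / u + 1 := by
          have hax : a x ≤ 1 := le_of_not_gt hx1
          have : a x * t / u = a x * (t / u) := by ring
          rw [hg_def, this]; nlinarith
        have hlog : Real.log g ≤ D := by
          rw [hD_def]; exact Real.log_le_log hg0 hbound
        calc ENNReal.ofReal (Real.log g) ≤ ENNReal.ofReal D :=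
              ENNReal.ofReal_le_ofReal hlog
        _ ≤ 0 + ENNReal.ofReal D := by rw [zero_add]
    calc ∫⁻ x, ENNReal.ofReal (Real.log (a x * t / u - t + 1)) ∂μ
        ≤ ∫⁻ x, ({x | 1 < a x}.indicator
            (fun x => ENNReal.ofReal (Real.log (a x))) x + ENNReal.ofReal D) ∂μ :=
          lintegral_mono_ae hptwise
      _ = (∫⁻ x, {x | 1 < a x}.indicator
            (fun x => ENNReal.ofReal (Real.log (a x))) x ∂μ) + ENNReal.ofReal D := by
          rw [lintegral_add_right _ measurable_const, lintegral_const, measure_univ,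
            mul_one]
      _ = (∫⁻ x in {x | 1 < a x}, ENNReal.ofReal (Real.log (a x)) ∂μ)
            + ENNReal.ofReal D := by rw [lintegral_indicator hS]
      _ < ⊤ := ENNReal.add_lt_top.mpr ⟨hfin, ENNReal.ofReal_lt_top⟩

private lemma stmt13_exists {Ω : Type*} [MeasurableSpace Ω] (μ : Measure Ω)
    [IsProbabilityMeasure μ] (a : Ω → ℝ) (hmeas : Measurable a) (ξ : ℝ)
    (hge : ∀ᵐ x ∂μ, ξ ≤ a x)
    (hnc : ∃ δ > 0, μ {x | a x < ξ + δ} < 1)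
    (hEpos : 0 < ∫ x, a x ∂μ ∨ ¬ Integrable a μ) :
    ∃ u t : ℝ, max 0 ξ < u ∧ (u < ∫ x, a x ∂μ ∨ ¬ Integrable a μ) ∧
      t ∈ Ioo 0 (u / (u - ξ)) := by
  have pick_t : ∀ u : ℝ, max 0 ξ < u → ∃ t, t ∈ Ioo 0 (u / (u - ξ)) := by
    intro u hu
    have hu0 : (0:ℝ) < u := lt_of_le_of_lt (le_max_left _ _) hu
    have huξ : ξ < u := lt_of_le_of_lt (le_max_right _ _) hu
    have hr : 0 < u / (u - ξ) := div_pos hu0 (by linarith)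
    exact ⟨u / (u - ξ) / 2, half_pos hr, half_lt_self hr⟩
  by_cases hInt : Integrable a μ
  · have hE0 : 0 < ∫ x, a x ∂μ := hEpos.resolve_right (by simpa using hInt)
    obtain ⟨δ, hδ, hμδ⟩ := hnc
    set s : Set Ω := {x | ξ + δ ≤ a x} with hs_def
    have hsm : MeasurableSet s := measurableSet_le measurable_const hmeas
    have hμs : 0 < μ s := by
      have hcompl : s = {x | a x < ξ + δ}ᶜ := by
        ext x; simp [hs_def, not_lt]
      rw [hcompl]
      rw [measure_compl (measurableSet_lt hmeas measurable_const) (measure_ne_top μ _)]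
      rw [measure_univ]
      exact tsub_pos_of_lt hμδ
    have hEξ : ξ < ∫ x, a x ∂μ := by
      have hgle : ∀ᵐ x ∂μ, ξ + s.indicator (fun _ => δ) x ≤ a x := by
        filter_upwards [hge] with x hx
        by_cases hxs : x ∈ s
        · rw [Set.indicator_of_mem hxs]; exact hxs
        · rw [Set.indicator_of_notMem hxs]; simpa using hx
      have hgint : Integrable (fun x => ξ + s.indicator (fun _ => δ) x) μ :=
        (integrable_const ξ).add ((integrable_const δ).indicator hsm)
      have h1 : ∫ x, (ξ + s.indicator (fun _ => δ) x) ∂μ ≤ ∫ x, a x ∂μ :=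
        integral_mono_ae hgint hInt hgle
      have h2 : ∫ x, (ξ + s.indicator (fun _ => δ) x) ∂μ
          = ξ + (μ s).toReal * δ := by
        rw [integral_add (integrable_const ξ) ((integrable_const δ).indicator hsm),
          integral_const, integral_indicator_const _ hsm, probReal_univ]
        simp [smul_eq_mul, Measure.real]
      have h3 : 0 < (μ s).toReal * δ := by
        apply mul_pos _ hδ
        exact ENNReal.toReal_pos hμs.ne' (measure_ne_top μ _)
      linarith [h1, h2 ▸ h1]
    set u : ℝ := (max 0 ξ + ∫ x, a x ∂μ) / 2 with hu_def
    have hmaxE : max 0 ξ < ∫ x, a x ∂μ := max_lt hE0 hEξ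
    have hu1 : max 0 ξ < u := by rw [hu_def]; linarith
    have hu2 : u < ∫ x, a x ∂μ := by rw [hu_def]; linarith
    obtain ⟨t, ht⟩ := pick_t u hu1
    exact ⟨u, t, hu1, Or.inl hu2, ht⟩
  · obtain ⟨t, ht⟩ := pick_t (max 0 ξ + 1) (by linarith [lt_add_one (max 0 ξ)])
    exact ⟨max 0 ξ + 1, t, by linarith [lt_add_one (max 0 ξ)], Or.inr hInt, ht⟩

/-- The following are equivalent: (1) `∫_{a>1} log a dF < +∞`;
(2) `G̃_u(t) < +∞` for every admissible `(u,t)`; (3) `G̃_{u₁}(t₁) < +∞` for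
some admissible `(u₁,t₁)`. Finiteness of `G̃_u(t)` is expressed as the
finiteness of the positive part of `∫ log(a t/u - t + 1) dF`. -/
theorem stmt13 {Ω : Type*} [MeasurableSpace Ω] (μ : Measure Ω) [IsProbabilityMeasure μ]
    (a : Ω → ℝ) (hmeas : Measurable a) (ξ : ℝ)
    (hge : ∀ᵐ x ∂μ, ξ ≤ a x)
    (hinf : ∀ ε > 0, 0 < μ {x | a x < ξ + ε})
    (hnc : ∃ δ > 0, μ {x | a x < ξ + δ} < 1)
    (hEpos : 0 < ∫ x, a x ∂μ ∨ ¬ Integrable a μ) :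
    ((∫⁻ x in {x | 1 < a x}, ENNReal.ofReal (Real.log (a x)) ∂μ < ⊤) ↔
      (∀ u t : ℝ, max 0 ξ < u → (u < ∫ x, a x ∂μ ∨ ¬ Integrable a μ) →
        t ∈ Ioo 0 (u / (u - ξ)) →
        ∫⁻ x, ENNReal.ofReal (Real.log (a x * t / u - t + 1)) ∂μ < ⊤)) ∧
    ((∀ u t : ℝ, max 0 ξ < u → (u < ∫ x, a x ∂μ ∨ ¬ Integrable a μ) →
        t ∈ Ioo 0 (u / (u - ξ)) →
        ∫⁻ x, ENNReal.ofReal (Real.log (a x * t / u - t + 1)) ∂μ < ⊤) ↔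
      (∃ u t : ℝ, max 0 ξ < u ∧ (u < ∫ x, a x ∂μ ∨ ¬ Integrable a μ) ∧
        t ∈ Ioo 0 (u / (u - ξ)) ∧
        ∫⁻ x, ENNReal.ofReal (Real.log (a x * t / u - t + 1)) ∂μ < ⊤)) := by
  obtain ⟨u₀, t₀, hu₀, hE₀, ht₀⟩ := stmt13_exists μ a hmeas ξ hge hnc hEpos
  refine ⟨⟨fun h1 u t hu _ ht => (stmt13_key μ a hmeas ξ hge u t hu ht).mpr h1,
    fun h2 => (stmt13_key μ a hmeas ξ hge u₀ t₀ hu₀ ht₀).mp (h2 u₀ t₀ hu₀ hE₀ ht₀)⟩,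
    ⟨fun h2 => ⟨u₀, t₀, hu₀, hE₀, ht₀, h2 u₀ t₀ hu₀ hE₀ ht₀⟩, ?_⟩⟩
  rintro ⟨u₁, t₁, h1, _, h3, h4⟩ u t hu _ ht
  exact (stmt13_key μ a hmeas ξ hge u t hu ht).mpr
    ((stmt13_key μ a hmeas ξ hge u₁ t₁ h1 h3).mp h4)
end

section
/- Assume ∫_{a>1} log a dF < +∞ and max(0,ξ) < u < E. Then the function t ↦ G̃_u(t) = exp(∫ log(a t/u - t + 1) dF) is strictly concave on (0, u/(u-ξ)) whenever a is not a.e. equal to u; in particular ∂²G̃_u/∂t² < 0. -/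
open MeasureTheory Real Filter Set

/-- Jensen: `exp (∫ g) ≤ ∫ exp g`, with equality only if `g` is a.e. constant. -/
lemma jensen_exp' {Ω : Type*} [MeasurableSpace Ω] (μ : Measure Ω) [IsProbabilityMeasure μ]
    (g : Ω → ℝ) (hg : Integrable g μ) (hge : Integrable (fun x => Real.exp (g x)) μ) :
    (g =ᵐ[μ] fun _ => ∫ x, g x ∂μ) ∨ Real.exp (∫ x, g x ∂μ) < ∫ x, Real.exp (g x) ∂μ := by
  have h := strictConvexOn_exp.ae_eq_const_or_map_average_lt
    continuous_exp.continuousOn isClosed_univ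
    (Eventually.of_forall fun x => mem_univ (g x)) hg (by exact hge)
  simpa [average_eq_integral, ← Function.const_def] using h

set_option maxHeartbeats 1000000 in
/-- Assume `∫_{a>1} log a dF < +∞` and `max(0,ξ) < u < E`, with `a` not a.e.
equal to `u`. Then `t ↦ G̃_u(t) = exp(∫ log(a t/u - t + 1) dF)` is strictly
concave on `(0, u/(u-ξ))`. -/
theorem stmt14 {Ω : Type*} [MeasurableSpace Ω] (μ : Measure Ω) [IsProbabilityMeasure μ]
    (a : Ω → ℝ) (hmeas : Measurable a) (ξ : ℝ)
    (hge : ∀ᵐ x ∂μ, ξ ≤ a x)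
    (hinf : ∀ ε > 0, 0 < μ {x | a x < ξ + ε})
    (hnc : ∃ δ > 0, μ {x | a x < ξ + δ} < 1)
    (hlog : ∫⁻ x in {x | 1 < a x}, ENNReal.ofReal (Real.log (a x)) ∂μ < ⊤)
    (u : ℝ) (hu : max 0 ξ < u)
    (huE : u < ∫ x, a x ∂μ ∨ ¬ Integrable a μ)
    (hau : ¬ (∀ᵐ x ∂μ, a x = u)) :
    StrictConcaveOn ℝ (Ioo 0 (u / (u - ξ)))
      (fun t => Real.exp (∫ x, Real.log (a x * t / u - t + 1) ∂μ)) := by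
  have hu0 : 0 < u := lt_of_le_of_lt (le_max_left 0 ξ) hu
  have hξu : ξ < u := lt_of_le_of_lt (le_max_right 0 ξ) hu
  have hsξ : 0 < u - ξ := sub_pos.2 hξu
  -- a is not a.e. equal to any constant
  have hnconst : ∀ K : ℝ, ¬ (∀ᵐ x ∂μ, a x = K) := by
    intro K hK
    obtain ⟨δ, hδ, hδ1⟩ := hnc
    by_cases hKδ : K < ξ + δ
    · have h1 : ∀ᵐ x ∂μ, a x < ξ + δ := by filter_upwards [hK] with x hx; rw [hx]; exact hKδ
      have hms : MeasurableSet {x | a x < ξ + δ} := measurableSet_lt hmeas measurable_const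
      have h0 : μ {x | a x < ξ + δ}ᶜ = 0 := by
        rw [ae_iff] at h1
        convert h1 using 2
        rfl
      have := measure_add_measure_compl (μ := μ) hms
      rw [h0, add_zero, measure_univ] at this
      exact absurd this hδ1.ne
    · push_neg at hKδ
      have h1 : ∀ᵐ x ∂μ, ¬ (a x < ξ + δ) := by
        filter_upwards [hK] with x hx; rw [hx]; exact not_lt.2 hKδ
      rw [ae_iff] at h1
      simp only [not_not] at h1
      exact absurd h1 (hinf δ hδ).ne'
  -- positivity of the integrand
  have hεpos : ∀ t ∈ Ioo 0 (u / (u - ξ)), (0:ℝ) < 1 - t * (u - ξ) / u := by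
    intro t ht
    have h1 : t * (u - ξ) < u := (lt_div_iff₀ hsξ).1 ht.2
    have : t * (u - ξ) / u < 1 := (div_lt_one hu0).2 h1
    linarith
  have hposf : ∀ t ∈ Ioo 0 (u / (u - ξ)), ∀ᵐ x ∂μ,
      1 - t * (u - ξ) / u ≤ a x * t / u - t + 1 := by
    intro t ht
    filter_upwards [hge] with x hx
    have key : a x * t / u - t + 1 - (1 - t * (u - ξ) / u) = t * (a x - ξ) / u := by
      field_simp; ring
    have h1 : 0 ≤ t * (a x - ξ) / u :=
      div_nonneg (mul_nonneg ht.1.le (by linarith)) hu0.le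
    linarith
  -- integrability of the positive part of log a
  have hml : Integrable (fun x => max (Real.log (a x)) 0) μ := by
    have hm : Measurable fun x => max (Real.log (a x)) 0 :=
      (Real.measurable_log.comp hmeas).max measurable_const
    refine ⟨hm.aestronglyMeasurable, ?_⟩
    have h0 : (0 : Ω → ℝ) ≤ᵐ[μ] fun x => max (Real.log (a x)) 0 :=
      Eventually.of_forall fun x => le_max_right _ _
    rw [hasFiniteIntegral_iff_ofReal h0]
    set L := Real.log (max 1 (-ξ)) with hL
    have hL0 : 0 ≤ L := Real.log_nonneg (le_max_left _ _)
    have hset : MeasurableSet {x | 1 < a x} := measurableSet_lt measurable_const hmeas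
    have hbound : ∀ᵐ x ∂μ, ENNReal.ofReal (max (Real.log (a x)) 0) ≤
        ({x | 1 < a x}.indicator (fun x => ENNReal.ofReal (Real.log (a x)))) x
          + ENNReal.ofReal L := by
      filter_upwards [hge] with x hx
      by_cases h : 1 < a x
      · have : ENNReal.ofReal (max (Real.log (a x)) 0) =
            ({x | 1 < a x}.indicator (fun x => ENNReal.ofReal (Real.log (a x)))) x := by
          rw [indicator_of_mem (show x ∈ {x | 1 < a x} from h), max_eq_left (Real.log_nonneg h.le)]
        rw [this]; exact le_self_add
      · rw [indicator_of_notMem (show x ∉ {x | 1 < a x} from h)]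
        push_neg at h
        have hlog1 : Real.log (a x) ≤ L := by
          rw [← Real.log_abs]
          rcases eq_or_ne (a x) 0 with h0 | h0
          · simp [h0, hL0]
          · have habs : 0 < |a x| := abs_pos.2 h0
            refine Real.log_le_log habs (abs_le.2 ⟨?_, le_trans h (le_max_left _ _)⟩)
            have := le_max_right (1:ℝ) (-ξ)
            linarith
        rw [zero_add]
        exact ENNReal.ofReal_le_ofReal (max_le hlog1 hL0)
    calc ∫⁻ x, ENNReal.ofReal (max (Real.log (a x)) 0) ∂μ
        ≤ ∫⁻ x, (({x | 1 < a x}.indicator (fun x => ENNReal.ofReal (Real.log (a x)))) x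
            + ENNReal.ofReal L) ∂μ := lintegral_mono_ae hbound
      _ = (∫⁻ x in {x | 1 < a x}, ENNReal.ofReal (Real.log (a x)) ∂μ) + ENNReal.ofReal L := by
          rw [lintegral_add_right _ measurable_const, lintegral_indicator hset _,
            lintegral_const, measure_univ, mul_one]
      _ < ⊤ := ENNReal.add_lt_top.2 ⟨hlog, ENNReal.ofReal_lt_top⟩
  -- integrability of the log integrand
  have hint : ∀ t ∈ Ioo 0 (u / (u - ξ)),
      Integrable (fun x => Real.log (a x * t / u - t + 1)) μ := by
    intro t ht
    have hε : 0 < 1 - t * (u - ξ) / u := hεpos t ht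
    set ε := 1 - t * (u - ξ) / u with hεdef
    have htu : 0 < t / u := div_pos ht.1 hu0
    have hC0 : 0 ≤ Real.log (1 + t / u) := Real.log_nonneg (by linarith)
    have hmf : Measurable fun x => Real.log (a x * t / u - t + 1) :=
      Real.measurable_log.comp ((((hmeas.mul_const t).div_const u).sub_const t).add_const 1)
    refine Integrable.mono'
      (g := fun x => (|Real.log ε| + Real.log (1 + t / u)) + max (Real.log (a x)) 0)
      ((integrable_const _).add hml) hmf.aestronglyMeasurable ?_
    filter_upwards [hposf t ht, hge] with x hfx hx
    have hfpos : 0 < a x * t / u - t + 1 := lt_of_lt_of_le hε hfx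
    have h3 : (0:ℝ) ≤ max (Real.log (a x)) 0 := le_max_right _ _
    have h5 : 0 ≤ |Real.log ε| := abs_nonneg _
    rw [Real.norm_eq_abs, abs_le]
    constructor
    · have h1 : Real.log ε ≤ Real.log (a x * t / u - t + 1) := Real.log_le_log hε hfx
      have h2 : -|Real.log ε| ≤ Real.log ε := neg_abs_le _
      linarith
    · by_cases h : 1 < a x
      · have hfle : a x * t / u - t + 1 ≤ a x * (1 + t / u) := by
          have hkey : a x * (1 + t / u) - (a x * t / u - t + 1) = a x + t - 1 := by ring
          linarith [ht.1]
        have hll : Real.log (a x * t / u - t + 1) ≤ Real.log (a x * (1 + t / u)) :=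
          Real.log_le_log hfpos hfle
        rw [Real.log_mul (by linarith) (by linarith)] at hll
        have h4 : Real.log (a x) ≤ max (Real.log (a x)) 0 := le_max_left _ _
        linarith
      · push_neg at h
        have hfle : a x * t / u - t + 1 ≤ 1 + t / u := by
          have h7 : a x * t ≤ t := by nlinarith [ht.1.le]
          have h6 : a x * t / u ≤ t / u := div_le_div_of_nonneg_right h7 hu0.le
          linarith [ht.1]
        have hll : Real.log (a x * t / u - t + 1) ≤ Real.log (1 + t / u) :=
          Real.log_le_log hfpos hfle
        linarith
  constructor
  · exact convex_Ioo _ _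
  intro t1 ht1 t2 ht2 hne c d hc hd hcd
  have hTmem : c * t1 + d * t2 ∈ Ioo 0 (u / (u - ξ)) :=
    (convex_Ioo (0:ℝ) (u / (u - ξ))) ht1 ht2 hc.le hd.le hcd
  show c * Real.exp (∫ x, Real.log (a x * t1 / u - t1 + 1) ∂μ)
      + d * Real.exp (∫ x, Real.log (a x * t2 / u - t2 + 1) ∂μ)
      < Real.exp (∫ x, Real.log (a x * (c * t1 + d * t2) / u - (c * t1 + d * t2) + 1) ∂μ)
  set T := c * t1 + d * t2 with hT
  set p : Ω → ℝ := fun x => a x * t1 / u - t1 + 1 with hpdef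
  set q : Ω → ℝ := fun x => a x * t2 / u - t2 + 1 with hqdef
  set m : Ω → ℝ := fun x => a x * T / u - T + 1 with hmdef
  have hkey : ∀ x, m x = c * p x + d * q x := by
    intro x
    simp only [hpdef, hqdef, hmdef, hT]
    field_simp
    linear_combination (-u) * hcd
  have hpq : ∀ᵐ x ∂μ, 0 < p x ∧ 0 < q x ∧ 0 < m x := by
    filter_upwards [hposf t1 ht1, hposf t2 ht2, hposf T hTmem] with x h1 h2 h3
    exact ⟨lt_of_lt_of_le (hεpos t1 ht1) h1, lt_of_lt_of_le (hεpos t2 ht2) h2,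
      lt_of_lt_of_le (hεpos T hTmem) h3⟩
  have hip : Integrable (fun x => Real.log (p x)) μ := hint t1 ht1
  have hiq : Integrable (fun x => Real.log (q x)) μ := hint t2 ht2
  have him : Integrable (fun x => Real.log (m x)) μ := hint T hTmem
  have hpm : Measurable p := (((hmeas.mul_const t1).div_const u).sub_const t1).add_const 1
  have hqm : Measurable q := (((hmeas.mul_const t2).div_const u).sub_const t2).add_const 1
  have hmm : Measurable m := (((hmeas.mul_const T).div_const u).sub_const T).add_const 1
  -- the two ratio functions
  have hh1m : Measurable fun x => c * p x / m x := (hpm.const_mul c).div hmm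
  have hh2m : Measurable fun x => d * q x / m x := (hqm.const_mul d).div hmm
  have hh1int : Integrable (fun x => c * p x / m x) μ := by
    refine Integrable.mono' (integrable_const (1:ℝ)) hh1m.aestronglyMeasurable ?_
    filter_upwards [hpq] with x hx
    obtain ⟨hxp, hxq, hxm⟩ := hx
    rw [Real.norm_eq_abs, abs_of_nonneg (by positivity), div_le_one hxm]
    nlinarith [hkey x, mul_pos hd hxq]
  have hh2int : Integrable (fun x => d * q x / m x) μ := by
    refine Integrable.mono' (integrable_const (1:ℝ)) hh2m.aestronglyMeasurable ?_
    filter_upwards [hpq] with x hx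
    obtain ⟨hxp, hxq, hxm⟩ := hx
    rw [Real.norm_eq_abs, abs_of_nonneg (by positivity), div_le_one hxm]
    nlinarith [hkey x, mul_pos hc hxp]
  -- the two ratios sum to 1
  have hsum1 : (∫ x, c * p x / m x ∂μ) + (∫ x, d * q x / m x ∂μ) = 1 := by
    have hone : (fun x => c * p x / m x + d * q x / m x) =ᵐ[μ] fun _ => (1:ℝ) := by
      filter_upwards [hpq] with x hx
      obtain ⟨hxp, hxq, hxm⟩ := hx
      field_simp
      linarith [hkey x]
    rw [← integral_add hh1int hh2int, integral_congr_ae hone, integral_const]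
    simp
  -- decompose the logs
  have hlog1 : (fun x => Real.log (c * p x / m x)) =ᵐ[μ]
      fun x => Real.log c + (Real.log (p x) - Real.log (m x)) := by
    filter_upwards [hpq] with x hx
    obtain ⟨hxp, hxq, hxm⟩ := hx
    rw [Real.log_div (by positivity) hxm.ne', Real.log_mul hc.ne' hxp.ne']
    ring
  have hlog2 : (fun x => Real.log (d * q x / m x)) =ᵐ[μ]
      fun x => Real.log d + (Real.log (q x) - Real.log (m x)) := by
    filter_upwards [hpq] with x hx
    obtain ⟨hxp, hxq, hxm⟩ := hx
    rw [Real.log_div (by positivity) hxm.ne', Real.log_mul hd.ne' hxq.ne']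
    ring
  have hsubpm : Integrable (fun x => Real.log (p x) - Real.log (m x)) μ := hip.sub him
  have hsubqm : Integrable (fun x => Real.log (q x) - Real.log (m x)) μ := hiq.sub him
  have hil1 : Integrable (fun x => Real.log (c * p x / m x)) μ :=
    ((integrable_const _).add hsubpm).congr hlog1.symm
  have hil2 : Integrable (fun x => Real.log (d * q x / m x)) μ :=
    ((integrable_const _).add hsubqm).congr hlog2.symm
  have hexp1 : (fun x => Real.exp (Real.log (c * p x / m x))) =ᵐ[μ]
      fun x => c * p x / m x := by
    filter_upwards [hpq] with x hx
    obtain ⟨hxp, hxq, hxm⟩ := hx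
    rw [Real.exp_log (by positivity)]
  have hexp2 : (fun x => Real.exp (Real.log (d * q x / m x))) =ᵐ[μ]
      fun x => d * q x / m x := by
    filter_upwards [hpq] with x hx
    obtain ⟨hxp, hxq, hxm⟩ := hx
    rw [Real.exp_log (by positivity)]
  have hie1 : Integrable (fun x => Real.exp (Real.log (c * p x / m x))) μ :=
    hh1int.congr hexp1.symm
  have hie2 : Integrable (fun x => Real.exp (Real.log (d * q x / m x))) μ :=
    hh2int.congr hexp2.symm
  set A := ∫ x, Real.log (p x) ∂μ with hA
  set B := ∫ x, Real.log (q x) ∂μ with hB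
  set M := ∫ x, Real.log (m x) ∂μ with hM
  have hval1 : (∫ x, Real.log (c * p x / m x) ∂μ) = Real.log c + (A - M) := by
    rw [integral_congr_ae hlog1, integral_add (integrable_const _) hsubpm,
      integral_const, integral_sub hip him]
    simp
    rfl
  have hval2 : (∫ x, Real.log (d * q x / m x) ∂μ) = Real.log d + (B - M) := by
    rw [integral_congr_ae hlog2, integral_add (integrable_const _) hsubqm,
      integral_const, integral_sub hiq him]
    simp
    rfl
  have res1 := jensen_exp' μ (fun x => Real.log (c * p x / m x)) hil1 hie1
  have res2 := jensen_exp' μ (fun x => Real.log (d * q x / m x)) hil2 hie2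
  have hint1 : (∫ x, Real.exp (Real.log (c * p x / m x)) ∂μ) = ∫ x, c * p x / m x ∂μ :=
    integral_congr_ae hexp1
  have hint2 : (∫ x, Real.exp (Real.log (d * q x / m x)) ∂μ) = ∫ x, d * q x / m x ∂μ :=
    integral_congr_ae hexp2
  -- the first Jensen inequality must be strict
  have P1 : Real.exp (Real.log c + (A - M)) < ∫ x, c * p x / m x ∂μ := by
    rcases res1 with hconst | hlt
    · exfalso
      set c1 := Real.exp (∫ x, Real.log (c * p x / m x) ∂μ) with hc1def
      have hc1pos : 0 < c1 := Real.exp_pos _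
      have hceq : ∀ᵐ x ∂μ, c * p x = c1 * m x := by
        filter_upwards [hconst, hpq] with x hx hx2
        obtain ⟨hxp, hxq, hxm⟩ := hx2
        have h7 : Real.exp (Real.log (c * p x / m x)) = c1 := by rw [hx]
        rw [Real.exp_log (by positivity)] at h7
        field_simp at h7
        linarith
      by_cases hco : c * t1 - c1 * T = 0
      · haveI : (MeasureTheory.ae μ).NeBot := ae_neBot.2 (IsProbabilityMeasure.ne_zero μ)
        obtain ⟨x, hx⟩ := hceq.exists
        simp only [hpdef, hmdef] at hx
        have hcc1 : c = c1 := by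
          linear_combination hx + (1 - a x / u) * hco
        have h8 : c * t1 = c * T := by linear_combination hco - T * hcc1
        have hTt1 : t1 = T := mul_left_cancel₀ hc.ne' h8
        have h10 : t1 = c * t1 + d * t2 := hTt1.trans hT
        have h9 : d * t2 = d * t1 := by linear_combination (-1 : ℝ) * h10 - t1 * hcd
        exact hne (mul_left_cancel₀ hd.ne' h9).symm
      · apply hnconst (((c * t1 - c1 * T - (c - c1)) * u) / (c * t1 - c1 * T))
        filter_upwards [hceq] with x hx
        simp only [hpdef, hmdef] at hx
        rw [eq_div_iff hco]
        field_simp at hx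
        linear_combination hx
    · rw [hval1, hint1] at hlt
      exact hlt
  have P2 : Real.exp (Real.log d + (B - M)) ≤ ∫ x, d * q x / m x ∂μ := by
    rcases res2 with hconst | hlt
    · have heq : (fun x => d * q x / m x) =ᵐ[μ]
          fun _ => Real.exp (∫ x, Real.log (d * q x / m x) ∂μ) := by
        filter_upwards [hconst, hpq] with x hx hx2
        obtain ⟨hxp, hxq, hxm⟩ := hx2
        rw [← hx, Real.exp_log (by positivity)]
      have : (∫ x, d * q x / m x ∂μ) = Real.exp (∫ x, Real.log (d * q x / m x) ∂μ) := by
        rw [integral_congr_ae heq, integral_const]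
        simp
      rw [this, hval2]
    · rw [hval2, hint2] at hlt
      exact hlt.le
  -- combine
  have hfinal : c * Real.exp A / Real.exp M + d * Real.exp B / Real.exp M < 1 := by
    rw [Real.exp_add, Real.exp_log hc, Real.exp_sub] at P1
    rw [Real.exp_add, Real.exp_log hd, Real.exp_sub] at P2
    calc c * Real.exp A / Real.exp M + d * Real.exp B / Real.exp M
        = c * (Real.exp A / Real.exp M) + d * (Real.exp B / Real.exp M) := by ring
      _ < (∫ x, c * p x / m x ∂μ) + ∫ x, d * q x / m x ∂μ :=
          add_lt_add_of_lt_of_le P1 P2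
      _ = 1 := hsum1
  rw [← add_div, div_lt_one (Real.exp_pos M)] at hfinal
  exact hfinal
end

section
/- Let t̃_u be the pre-optimal proportion (the unique zero of w_u in (0, u/(u-ξ))) for u ∈ (max(0, ξ+1/H_ξ), E), and assume ∫_{a>1} log a dF < +∞. Then G̃_u(t̃_u) > 1, and u ↦ G̃_u(t̃_u) is strictly decreasing, with ∂G̃_u(t̃_u)/∂u = -(t̃_u/u)·G̃_u(t̃_u). -/
open MeasureTheory Real Filter Set Topology
set_option linter.unusedSectionVars false
set_option maxHeartbeats 1000000

namespace Stmt17Aux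
variable {Ω : Type*} [MeasurableSpace Ω] {μ : Measure Ω} [IsProbabilityMeasure μ]
variable {a : Ω → ℝ} {ξ u v r r' t : ℝ}

/-- generic strict integral inequality -/
lemma integral_lt {f g : Ω → ℝ} (hf : Integrable f μ) (hg : Integrable g μ)
    (hle : ∀ᵐ x ∂μ, f x ≤ g x) (s : Set Ω) (hs : 0 < μ s)
    (hstrict : ∀ᵐ x ∂μ, x ∈ s → f x < g x) :
    ∫ x, f x ∂μ < ∫ x, g x ∂μ := by
  have hint : Integrable (fun x => g x - f x) μ := hg.sub hf
  have hnn : 0 ≤ᵐ[μ] fun x => g x - f x := hle.mono fun x hx => by simp [hx]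
  have hpos : 0 < ∫ x, (g x - f x) ∂μ := by
    rw [integral_pos_iff_support_of_nonneg_ae hnn hint]
    have h1 : s ⊆ Function.support (fun x => g x - f x) ∪ {x | ¬ (x ∈ s → f x < g x)} := by
      intro x hx
      by_cases hx2 : f x < g x
      · refine Or.inl ?_
        simp only [Function.mem_support]
        intro h
        nlinarith
      · exact Or.inr (by simp only [Set.mem_setOf_eq, Classical.not_imp]; exact ⟨hx, hx2⟩)
    have h2 : μ {x | ¬ (x ∈ s → f x < g x)} = 0 := ae_iff.mp hstrict
    have h3 : μ s ≤ μ (Function.support fun x => g x - f x) := by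
      calc μ s ≤ μ (Function.support (fun x => g x - f x) ∪ {x | ¬ (x ∈ s → f x < g x)}) :=
            measure_mono h1
        _ ≤ μ (Function.support fun x => g x - f x) + μ {x | ¬ (x ∈ s → f x < g x)} :=
            measure_union_le _ _
        _ = μ (Function.support fun x => g x - f x) := by rw [h2, add_zero]
    exact lt_of_lt_of_le hs h3
  have h4 := integral_sub hg hf
  rw [h4] at hpos
  linarith

def AdmR (ξ u r : ℝ) : Prop := 0 < u ∧ ξ < u ∧ 0 < r ∧ r * (u - ξ) < 1

lemma yr_pos (h : AdmR ξ u r) {x : Ω} (hx : ξ ≤ a x) :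
    0 < r * (a x - u) + 1 := by obtain ⟨hu, hξ, hr, h1⟩ := h; nlinarith

lemma log_le_aux {A B : ℝ} (hA : 0 < A) (hB : 0 < B) :
    Real.log B ≤ Real.log A + (B - A) / A := by
  have h := Real.log_le_sub_one_of_pos (show 0 < B / A by positivity)
  rw [Real.log_div (ne_of_gt hB) (ne_of_gt hA)] at h
  have : B / A - 1 = (B - A) / A := by field_simp
  linarith [this ▸ h]

lemma log_ge_aux {A B : ℝ} (hA : 0 < A) (hB : 0 < B) :
    Real.log A + (B - A) / B ≤ Real.log B := by
  have h := log_le_aux hB hA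
  have h2 : (A - B) / B = -((B - A)/B) := by ring
  linarith [h2 ▸ h]

lemma yr_ge (hr : 0 ≤ r) {x : Ω} (hx : ξ ≤ a x) :
    1 - r * (u - ξ) ≤ r * (a x - u) + 1 := by nlinarith

lemma meas_yr (hmeas : Measurable a) : Measurable (fun x => r * (a x - u) + 1) := by
  measurability

/-- bounded ae + measurable → integrable -/
lemma integrable_of_bound {f : Ω → ℝ} (hf : AEStronglyMeasurable f μ) (C : ℝ)
    (h : ∀ᵐ x ∂μ, |f x| ≤ C) : Integrable f μ :=
  Integrable.mono' (integrable_const C) hf (h.mono fun x hx => by simpa using hx)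

lemma integrable_inv_yr (hmeas : Measurable a) (hge : ∀ᵐ x ∂μ, ξ ≤ a x) (h : AdmR ξ u r) :
    Integrable (fun x => 1 / (r * (a x - u) + 1)) μ := by
  obtain ⟨hu, hξ, hr, h1⟩ := h
  have hδ : 0 < 1 - r * (u - ξ) := by linarith
  refine integrable_of_bound ((Measurable.div measurable_const (meas_yr hmeas)).aestronglyMeasurable)
    (1 / (1 - r * (u - ξ))) (hge.mono fun x hx => ?_)
  have hy := yr_pos ⟨hu, hξ, hr, h1⟩ hx
  have hy2 := yr_ge (le_of_lt hr) hx (u := u)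
  rw [abs_of_nonneg (by positivity)]
  exact one_div_le_one_div_of_le hδ hy2

lemma integrable_sub_div_yr (hmeas : Measurable a) (hge : ∀ᵐ x ∂μ, ξ ≤ a x) (h : AdmR ξ u r) :
    Integrable (fun x => (a x - u) / (r * (a x - u) + 1)) μ := by
  obtain ⟨hu, hξ, hr, h1⟩ := h
  have hδ : 0 < 1 - r * (u - ξ) := by linarith
  refine integrable_of_bound (((hmeas.sub measurable_const).div (meas_yr hmeas)).aestronglyMeasurable)
    (max (1/r) ((u - ξ) / (1 - r * (u - ξ)))) (hge.mono fun x hx => ?_)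
  have hy := yr_pos ⟨hu, hξ, hr, h1⟩ hx
  rcases le_or_gt u (a x) with hz | hz
  · rw [abs_of_nonneg (div_nonneg (by linarith) (le_of_lt hy))]
    refine le_max_of_le_left ?_
    rw [div_le_div_iff₀ hy hr]
    nlinarith
  · rw [abs_of_nonpos (div_nonpos_of_nonpos_of_nonneg (by linarith) (le_of_lt hy))]
    refine le_max_of_le_right ?_
    rw [← neg_div, div_le_div_iff₀ hy hδ]
    have hy2 := yr_ge (le_of_lt hr) hx (u := u)
    nlinarith

lemma integrable_logpos (hmeas : Measurable a)
    (hlog : ∫⁻ x in {x | 1 < a x}, ENNReal.ofReal (Real.log (a x)) ∂μ < ⊤) :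
    Integrable (fun x => if 1 < a x then Real.log (a x) else 0) μ := by
  have hms : MeasurableSet {x | 1 < a x} := measurableSet_lt measurable_const hmeas
  have hm : Measurable (fun x => if 1 < a x then Real.log (a x) else 0) :=
    Measurable.ite hms (hmeas.log) measurable_const
  refine ⟨hm.aestronglyMeasurable, ?_⟩
  rw [hasFiniteIntegral_iff_norm]
  have heq : ∀ x, ENNReal.ofReal ‖(if 1 < a x then Real.log (a x) else 0)‖ =
      {x | 1 < a x}.indicator (fun x => ENNReal.ofReal (Real.log (a x))) x := by
    intro x
    by_cases hx : 1 < a x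
    · simp only [hx, if_true, Set.indicator_of_mem (show x ∈ {x | 1 < a x} from hx)]
      rw [Real.norm_eq_abs, abs_of_nonneg (Real.log_nonneg (le_of_lt hx))]
    · simp [hx, Set.indicator_of_notMem (show x ∉ {x | 1 < a x} from hx)]
  calc ∫⁻ x, ENNReal.ofReal ‖(if 1 < a x then Real.log (a x) else 0)‖ ∂μ
      = ∫⁻ x, {x | 1 < a x}.indicator (fun x => ENNReal.ofReal (Real.log (a x))) x ∂μ := by
        exact lintegral_congr heq
    _ = ∫⁻ x in {x | 1 < a x}, ENNReal.ofReal (Real.log (a x)) ∂μ := lintegral_indicator hms _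
    _ < ⊤ := hlog

lemma integrable_log_yr (hmeas : Measurable a) (hge : ∀ᵐ x ∂μ, ξ ≤ a x)
    (hL : Integrable (fun x => if 1 < a x then Real.log (a x) else 0) μ)
    (h : AdmR ξ u r) :
    Integrable (fun x => Real.log (r * (a x - u) + 1)) μ := by
  obtain ⟨hu, hξ, hr, h1⟩ := h
  have hδ : 0 < 1 - r * (u - ξ) := by linarith
  set C : ℝ := max (-Real.log (1 - r * (u - ξ))) (Real.log (1 + r * (1 + u))) with hC
  refine Integrable.mono' ((integrable_const C).add hL)
    ((by measurability : Measurable (fun x => Real.log (r * (a x - u) + 1))).aestronglyMeasurable) (hge.mono fun x hx => ?_)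
  have hy : 0 < r * (a x - u) + 1 := by nlinarith
  have hh : 0 ≤ (if 1 < a x then Real.log (a x) else 0) := by
    split
    · exact Real.log_nonneg (by linarith)
    · exact le_refl 0
  have hmax : Real.log (max (a x) 1) = (if 1 < a x then Real.log (a x) else 0) := by
    rcases le_or_gt (a x) 1 with h2 | h2
    · rw [max_eq_right h2, Real.log_one, if_neg (not_lt.mpr h2)]
    · rw [max_eq_left (le_of_lt h2), if_pos h2]
  simp only [Pi.add_apply]
  rw [Real.norm_eq_abs, abs_le]
  refine ⟨?_, ?_⟩
  · -- lower bound : -(C + h) ≤ log y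
    have h3 : Real.log (1 - r * (u - ξ)) ≤ Real.log (r * (a x - u) + 1) :=
      Real.log_le_log hδ (by nlinarith)
    have h4 : -Real.log (1 - r * (u - ξ)) ≤ C := le_max_left _ _
    linarith
  · -- upper bound
    have h5 : r * (a x - u) + 1 ≤ (1 + r * (1 + u)) * max (a x) 1 := by
      rcases le_or_gt (a x) 1 with h2 | h2
      · rw [max_eq_right h2]; nlinarith
      · rw [max_eq_left (le_of_lt h2)]
        nlinarith [mul_nonneg (mul_nonneg hr.le hu.le) (sub_nonneg.mpr h2.le), mul_nonneg (mul_nonneg hr.le hu.le) (le_of_lt (lt_trans one_pos h2))]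
    have h6 : Real.log (r * (a x - u) + 1) ≤ Real.log ((1 + r * (1 + u)) * max (a x) 1) :=
      Real.log_le_log hy h5
    rw [Real.log_mul (by positivity) (by positivity), hmax] at h6
    have h7 : Real.log (1 + r * (1 + u)) ≤ C := le_max_right _ _
    linarith

/-- E1 envelope inequality in `u` -/
lemma E1 (hmeas : Measurable a) (hge : ∀ᵐ x ∂μ, ξ ≤ a x)
    (hL : Integrable (fun x => if 1 < a x then Real.log (a x) else 0) μ)
    (h : AdmR ξ u r) (h' : AdmR ξ v r) :
    ∫ x, Real.log (r * (a x - v) + 1) ∂μ ≤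
      ∫ x, Real.log (r * (a x - u) + 1) ∂μ +
        r * (u - v) * ∫ x, 1 / (r * (a x - u) + 1) ∂μ := by
  have i1 := integrable_log_yr hmeas hge hL h
  have i2 := integrable_log_yr hmeas hge hL h'
  have i3 := integrable_inv_yr hmeas hge h (μ := μ)
  have key : ∫ x, Real.log (r * (a x - v) + 1) ∂μ ≤
      ∫ x, (Real.log (r * (a x - u) + 1) + r * (u - v) * (1 / (r * (a x - u) + 1))) ∂μ := by
    refine integral_mono_ae i2 (i1.add (i3.const_mul _)) (hge.mono fun x hx => ?_)
    have hA := yr_pos h hx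
    have hB := yr_pos h' hx
    have := log_le_aux hA hB
    have heq : (r * (a x - v) + 1 - (r * (a x - u) + 1)) / (r * (a x - u) + 1)
        = r * (u - v) * (1 / (r * (a x - u) + 1)) := by ring
    linarith [heq ▸ this]
  rw [integral_add i1 (i3.const_mul _), integral_const_mul] at key
  exact key

/-- E3 concavity-in-r inequality -/
lemma E3 (hmeas : Measurable a) (hge : ∀ᵐ x ∂μ, ξ ≤ a x)
    (hL : Integrable (fun x => if 1 < a x then Real.log (a x) else 0) μ)
    (h : AdmR ξ u r) (h' : AdmR ξ u r') :
    ∫ x, Real.log (r' * (a x - u) + 1) ∂μ ≤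
      ∫ x, Real.log (r * (a x - u) + 1) ∂μ +
        (r' - r) * ∫ x, (a x - u) / (r * (a x - u) + 1) ∂μ := by
  have i1 := integrable_log_yr hmeas hge hL h
  have i2 := integrable_log_yr hmeas hge hL h'
  have i3 := integrable_sub_div_yr hmeas hge h (μ := μ)
  have key : ∫ x, Real.log (r' * (a x - u) + 1) ∂μ ≤
      ∫ x, (Real.log (r * (a x - u) + 1) + (r' - r) * ((a x - u) / (r * (a x - u) + 1))) ∂μ := by
    refine integral_mono_ae i2 (i1.add (i3.const_mul _)) (hge.mono fun x hx => ?_)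
    have hA := yr_pos h hx
    have hB := yr_pos h' hx
    have := log_le_aux hA hB
    have heq : (r' * (a x - u) + 1 - (r * (a x - u) + 1)) / (r * (a x - u) + 1)
        = (r' - r) * ((a x - u) / (r * (a x - u) + 1)) := by ring
    linarith [heq ▸ this]
  rw [integral_add i1 (i3.const_mul _), integral_const_mul] at key
  exact key

/-- `∫ 1/y = 1 - r * ∫ (a-u)/y` -/
lemma I_eq (hmeas : Measurable a) (hge : ∀ᵐ x ∂μ, ξ ≤ a x) (h : AdmR ξ u r) :
    ∫ x, 1 / (r * (a x - u) + 1) ∂μ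
      = 1 - r * ∫ x, (a x - u) / (r * (a x - u) + 1) ∂μ := by
  have i3 := integrable_sub_div_yr hmeas hge h (μ := μ)
  have heq : ∫ x, 1 / (r * (a x - u) + 1) ∂μ
      = ∫ x, (1 - r * ((a x - u) / (r * (a x - u) + 1))) ∂μ := by
    refine integral_congr_ae (hge.mono fun x hx => ?_)
    have hA := yr_pos h hx
    field_simp
    ring
  rw [heq, integral_sub (integrable_const 1) (i3.const_mul _), integral_const_mul]
  simp

/-- positivity of F at the critical point -/
lemma F_pos (hmeas : Measurable a) (hge : ∀ᵐ x ∂μ, ξ ≤ a x)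
    (hL : Integrable (fun x => if 1 < a x then Real.log (a x) else 0) μ)
    (h : AdmR ξ u r) (hK : ∫ x, (a x - u) / (r * (a x - u) + 1) ∂μ = 0)
    (hs : 0 < μ {x | a x < u}) :
    0 < ∫ x, Real.log (r * (a x - u) + 1) ∂μ := by
  have i1 := integrable_log_yr hmeas hge hL h
  have i3 := integrable_inv_yr hmeas hge h (μ := μ)
  have hI : ∫ x, 1 / (r * (a x - u) + 1) ∂μ = 1 := by
    rw [I_eq hmeas hge h, hK, mul_zero, sub_zero]
  have hlt : ∫ x, (1 - 1 / (r * (a x - u) + 1)) ∂μ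
      < ∫ x, Real.log (r * (a x - u) + 1) ∂μ := by
    refine integral_lt ((integrable_const 1).sub i3) i1 (hge.mono fun x hx => ?_)
      {x | a x < u} hs (hge.mono fun x hx hxu => ?_)
    · have hA := yr_pos h hx
      have h2 := Real.log_le_sub_one_of_pos (show 0 < 1 / (r * (a x - u) + 1) by positivity)
      rw [one_div, Real.log_inv] at h2
      rw [one_div]
      linarith
    · have hA := yr_pos h hx
      have hne : (r * (a x - u) + 1)⁻¹ ≠ 1 := by
        rw [Ne, inv_eq_one]
        intro hc
        obtain ⟨hu, hξ, hr, _⟩ := h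
        have h0 : r * (a x - u) = 0 := by linarith
        rcases mul_eq_zero.mp h0 with h9 | h9
        · exact absurd h9 (ne_of_gt hr)
        · exact absurd (by linarith : a x = u) (ne_of_lt hxu)
      have h2 := Real.log_lt_sub_one_of_pos
        (show 0 < (r * (a x - u) + 1)⁻¹ by positivity) hne
      rw [Real.log_inv] at h2
      rw [one_div]
      linarith
  have : ∫ x, (1 - 1 / (r * (a x - u) + 1)) ∂μ = 0 := by
    rw [integral_sub (integrable_const 1) i3, hI]
    simp
  linarith [this ▸ hlt]

/-- strict antitonicity of Kr in r -/
lemma Kr_lt (hmeas : Measurable a) (hge : ∀ᵐ x ∂μ, ξ ≤ a x)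
    (h : AdmR ξ u r) (h' : AdmR ξ u r') (hrr : r < r')
    (hs : 0 < μ {x | a x < u}) :
    ∫ x, (a x - u) / (r' * (a x - u) + 1) ∂μ
      < ∫ x, (a x - u) / (r * (a x - u) + 1) ∂μ := by
  refine integral_lt (integrable_sub_div_yr hmeas hge h') (integrable_sub_div_yr hmeas hge h)
    (hge.mono fun x hx => ?_) {x | a x < u} hs (hge.mono fun x hx hxu => ?_)
  · have hA := yr_pos h hx
    have hB := yr_pos h' hx
    rw [div_le_div_iff₀ hB hA]
    nlinarith [sq_nonneg (a x - u)]
  · have hA := yr_pos h hx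
    have hB := yr_pos h' hx
    rw [div_lt_div_iff₀ hB hA]
    nlinarith [sq_nonneg (a x - u), mul_pos (sub_pos.mpr hrr) (mul_pos (mul_self_pos.mpr (sub_ne_zero.mpr (ne_of_lt hxu))) one_pos)]

lemma mem_U_bound {p : ℝ × ℝ} {δ : ℝ} (hp2 : 0 < p.2) (hpb : p.2 * (p.1 - ξ) < 1 - δ/2)
    (hδ : 0 < δ) {x : Ω} (hx : ξ ≤ a x) :
    δ/2 < p.2 * (a x - p.1) + 1 := by nlinarith

/-- joint continuity of `Ir` -/
lemma cont_Ir (hmeas : Measurable a) (hge : ∀ᵐ x ∂μ, ξ ≤ a x) (h : AdmR ξ u r) :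
    ContinuousAt (fun p : ℝ × ℝ => ∫ x, 1 / (p.2 * (a x - p.1) + 1) ∂μ) (u, r) := by
  obtain ⟨hu, hξ, hr, h1⟩ := h
  set δ : ℝ := 1 - r * (u - ξ) with hδdef
  have hδ : 0 < δ := by simp only [hδdef]; linarith
  have hUopen : IsOpen {p : ℝ × ℝ | 0 < p.2 ∧ p.2 * (p.1 - ξ) < 1 - δ/2} :=
    (isOpen_lt continuous_const continuous_snd).inter
      (isOpen_lt (continuous_snd.mul (continuous_fst.sub continuous_const)) continuous_const)
  have hUmem : (u, r) ∈ {p : ℝ × ℝ | 0 < p.2 ∧ p.2 * (p.1 - ξ) < 1 - δ/2} := by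
    refine ⟨hr, ?_⟩
    simp only [hδdef]
    linarith
  have hnhds := hUopen.mem_nhds hUmem
  refine continuousAt_of_dominated ?_ ?_ (integrable_const (2/δ)) ?_
  · filter_upwards with p
    exact (Measurable.div measurable_const (by fun_prop)).aestronglyMeasurable
  · filter_upwards [hnhds] with p hp
    filter_upwards [hge] with x hx
    have hy := mem_U_bound hp.1 hp.2 hδ hx
    rw [Real.norm_eq_abs, abs_of_nonneg (div_nonneg zero_le_one (by linarith))]
    rw [div_le_div_iff₀ (by linarith) hδ]
    linarith
  · filter_upwards [hge] with x hx
    have hy : 0 < r * (a x - u) + 1 := yr_pos ⟨hu, hξ, hr, h1⟩ hx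
    exact ContinuousAt.div continuousAt_const (by fun_prop) (ne_of_gt hy)

/-- joint continuity of `Kr` -/
lemma cont_Kr (hmeas : Measurable a) (hge : ∀ᵐ x ∂μ, ξ ≤ a x) (h : AdmR ξ u r) :
    ContinuousAt (fun p : ℝ × ℝ => ∫ x, (a x - p.1) / (p.2 * (a x - p.1) + 1) ∂μ) (u, r) := by
  obtain ⟨hu, hξ, hr, h1⟩ := h
  set δ : ℝ := 1 - r * (u - ξ) with hδdef
  have hδ : 0 < δ := by simp only [hδdef]; linarith
  set U : Set (ℝ × ℝ) :=
    {p : ℝ × ℝ | r/2 < p.2 ∧ p.2 * (p.1 - ξ) < 1 - δ/2 ∧ p.1 < u + 1} with hUdef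
  have hUopen : IsOpen U :=
    (isOpen_lt continuous_const continuous_snd).inter
      ((isOpen_lt (continuous_snd.mul (continuous_fst.sub continuous_const)) continuous_const).inter
        (isOpen_lt continuous_fst continuous_const))
  have hUmem : (u, r) ∈ U := by
    refine ⟨by simpa using half_lt_self hr, ?_, by linarith⟩
    simp only [hδdef]
    linarith
  have hnhds := hUopen.mem_nhds hUmem
  refine continuousAt_of_dominated ?_ ?_
    (integrable_const (max (2/r) ((u + 1 - ξ) / (δ/2)))) ?_
  · filter_upwards with p
    exact (Measurable.div (by fun_prop) (by fun_prop)).aestronglyMeasurable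
  · filter_upwards [hnhds] with p hp
    filter_upwards [hge] with x hx
    obtain ⟨hp1, hp2, hp3⟩ := hp
    have hp2pos : 0 < p.2 := by linarith
    have hy := mem_U_bound hp2pos hp2 hδ hx
    rcases le_or_gt p.1 (a x) with hz | hz
    · rw [Real.norm_eq_abs, abs_of_nonneg (div_nonneg (by linarith) (by linarith))]
      refine le_max_of_le_left ?_
      rw [div_le_div_iff₀ (by linarith) hr]
      nlinarith
    · rw [Real.norm_eq_abs,
        abs_of_nonpos (div_nonpos_of_nonpos_of_nonneg (by linarith) (by linarith))]
      refine le_max_of_le_right ?_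
      rw [← neg_div, div_le_div_iff₀ (by linarith) (by linarith)]
      nlinarith
  · filter_upwards [hge] with x hx
    have hy : 0 < r * (a x - u) + 1 := yr_pos ⟨hu, hξ, hr, h1⟩ hx
    exact ContinuousAt.div (by fun_prop) (by fun_prop) (ne_of_gt hy)

end Stmt17Aux

/-- Let `T u = t̃_u` be the pre-optimal proportion for
`u ∈ (max(0, ξ+1/H_ξ), E)`, and assume `∫_{a>1} log a dF < +∞`. Then
`G̃_u(t̃_u) > 1`, `u ↦ G̃_u(t̃_u)` is strictly decreasing, and
`∂G̃_u(t̃_u)/∂u = -(t̃_u/u)·G̃_u(t̃_u)`. -/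
theorem stmt17 {Ω : Type*} [MeasurableSpace Ω] (μ : Measure Ω) [IsProbabilityMeasure μ]
    (a : Ω → ℝ) (hmeas : Measurable a) (ξ : ℝ)
    (hge : ∀ᵐ x ∂μ, ξ ≤ a x)
    (hinf : ∀ ε > 0, 0 < μ {x | a x < ξ + ε})
    (hnc : ∃ δ > 0, μ {x | a x < ξ + δ} < 1)
    (hlog : ∫⁻ x in {x | 1 < a x}, ENNReal.ofReal (Real.log (a x)) ∂μ < ⊤)
    (T : ℝ → ℝ)
    (hT : ∀ u,
      max 0 (ξ + (∫⁻ x, ENNReal.ofReal ((a x - ξ)⁻¹) ∂μ)⁻¹.toReal) < u →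
      (u < ∫ x, a x ∂μ ∨ ¬ Integrable a μ) →
      T u ∈ Ioo 0 (u / (u - ξ)) ∧
        ∫ x, (a x - u) / (a x * T u - u * T u + u) ∂μ = 0) :
    (∀ u ∈ {u : ℝ |
        max 0 (ξ + (∫⁻ x, ENNReal.ofReal ((a x - ξ)⁻¹) ∂μ)⁻¹.toReal) < u ∧
        (u < ∫ x, a x ∂μ ∨ ¬ Integrable a μ)},
      1 < Real.exp (∫ x, Real.log (a x * T u / u - T u + 1) ∂μ)) ∧
    StrictAntiOn (fun u => Real.exp (∫ x, Real.log (a x * T u / u - T u + 1) ∂μ))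
      {u : ℝ | max 0 (ξ + (∫⁻ x, ENNReal.ofReal ((a x - ξ)⁻¹) ∂μ)⁻¹.toReal) < u ∧
        (u < ∫ x, a x ∂μ ∨ ¬ Integrable a μ)} ∧
    (∀ u ∈ {u : ℝ |
        max 0 (ξ + (∫⁻ x, ENNReal.ofReal ((a x - ξ)⁻¹) ∂μ)⁻¹.toReal) < u ∧
        (u < ∫ x, a x ∂μ ∨ ¬ Integrable a μ)},
      HasDerivAt (fun v => Real.exp (∫ x, Real.log (a x * T v / v - T v + 1) ∂μ))
        (-(T u / u) * Real.exp (∫ x, Real.log (a x * T u / u - T u + 1) ∂μ)) u) := by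
  classical
  set m : ℝ := max 0 (ξ + (∫⁻ x, ENNReal.ofReal ((a x - ξ)⁻¹) ∂μ)⁻¹.toReal) with hm
  set S : Set ℝ := {u : ℝ | m < u ∧ (u < ∫ x, a x ∂μ ∨ ¬ Integrable a μ)} with hS
  set G : ℝ → ℝ := fun v => ∫ x, Real.log (a x * T v / v - T v + 1) ∂μ with hG
  have hmξ : ξ ≤ m := le_trans (le_add_of_nonneg_right ENNReal.toReal_nonneg) (le_max_right _ _)
  have hL : Integrable (fun x => if 1 < a x then Real.log (a x) else 0) μ :=
    Stmt17Aux.integrable_logpos hmeas hlog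
  -- basic facts for u ∈ S
  have hu0 : ∀ u ∈ S, 0 < u := fun u hu => lt_of_le_of_lt (le_max_left _ _) hu.1
  have huξ : ∀ u ∈ S, ξ < u := fun u hu => lt_of_le_of_lt hmξ hu.1
  have hμs : ∀ u ∈ S, 0 < μ {x | a x < u} := by
    intro u hu
    have h := hinf (u - ξ) (by linarith [huξ u hu])
    have he : ξ + (u - ξ) = u := by ring
    rwa [he] at h
  have hAdm : ∀ u ∈ S, Stmt17Aux.AdmR ξ u (T u / u) := by
    intro u hu
    obtain ⟨⟨hT1, hT2⟩, _⟩ := hT u hu.1 hu.2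
    have h0 := hu0 u hu
    have hξu := huξ u hu
    refine ⟨h0, hξu, div_pos hT1 h0, ?_⟩
    rw [div_mul_eq_mul_div, div_lt_one h0]
    calc T u * (u - ξ) < (u / (u - ξ)) * (u - ξ) := by
          exact mul_lt_mul_of_pos_right hT2 (by linarith)
      _ = u := div_mul_cancel₀ u (by linarith : u - ξ ≠ 0)
  have hKr0 : ∀ u ∈ S, ∫ x, (a x - u) / ((T u / u) * (a x - u) + 1) ∂μ = 0 := by
    intro u hu
    obtain ⟨_, hK⟩ := hT u hu.1 hu.2
    have h0 : u ≠ 0 := ne_of_gt (hu0 u hu)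
    have heq : ∀ x, (a x - u) / ((T u / u) * (a x - u) + 1)
        = u * ((a x - u) / (a x * T u - u * T u + u)) := by
      intro x
      have hden : a x * T u - u * T u + u = u * ((T u / u) * (a x - u) + 1) := by
        field_simp
      rw [hden, mul_div_assoc']
      rw [mul_div_mul_left _ _ h0]
    calc ∫ x, (a x - u) / ((T u / u) * (a x - u) + 1) ∂μ
        = ∫ x, u * ((a x - u) / (a x * T u - u * T u + u)) ∂μ := by
          exact integral_congr_ae (Filter.Eventually.of_forall heq)
      _ = u * ∫ x, (a x - u) / (a x * T u - u * T u + u) ∂μ := integral_const_mul _ _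
      _ = 0 := by rw [hK, mul_zero]
  -- rewrite G in r-form
  have hGeq : ∀ u : ℝ, u ≠ 0 → G u = ∫ x, Real.log ((T u / u) * (a x - u) + 1) ∂μ := by
    intro u h0
    simp only [hG]
    refine integral_congr_ae (Filter.Eventually.of_forall fun x => ?_)
    congr 1
    field_simp
  have hGpos : ∀ u ∈ S, 0 < G u := by
    intro u hu
    rw [hGeq u (ne_of_gt (hu0 u hu))]
    exact Stmt17Aux.F_pos hmeas hge hL (hAdm u hu) (hKr0 u hu) (hμs u hu)
  -- openness and convexity of S
  have hSoc : IsOpen S ∧ Convex ℝ S := by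
    by_cases hInt : Integrable a μ
    · have : S = Ioo m (∫ x, a x ∂μ) := by
        ext w
        simp [hS, hInt, Set.mem_Ioo]
      rw [this]
      exact ⟨isOpen_Ioo, convex_Ioo _ _⟩
    · have : S = Ioi m := by
        ext w
        simp [hS, hInt, Set.mem_Ioi]
      rw [this]
      exact ⟨isOpen_Ioi, convex_Ioi _⟩
  -- continuity of ρ = T·/· at points of S
  have hρcont : ∀ u ∈ S, ContinuousAt (fun v => T v / v) u := by
    intro u hu
    obtain ⟨h0, hξu, hs₀, hs₁⟩ := hAdm u hu
    rw [ContinuousAt]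
    refine tendsto_order.2 ⟨?_, ?_⟩
    · intro b hb
      set s' : ℝ := max ((b + T u / u)/2) ((T u / u)/2) with hs'def
      have hs'pos : 0 < s' := lt_of_lt_of_le (half_pos hs₀) (le_max_right _ _)
      have hs'lt : s' < T u / u := max_lt (by linarith) (by linarith [half_lt_self hs₀])
      have hs'b : b < s' := lt_of_lt_of_le (by linarith) (le_max_left _ _)
      have hAdm' : Stmt17Aux.AdmR ξ u s' :=
        ⟨h0, hξu, hs'pos, lt_of_le_of_lt
          (mul_le_mul_of_nonneg_right hs'lt.le (by linarith)) hs₁⟩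
      have hpos : 0 < ∫ x, (a x - u) / (s' * (a x - u) + 1) ∂μ := by
        have := Stmt17Aux.Kr_lt hmeas hge hAdm' ⟨h0, hξu, hs₀, hs₁⟩ hs'lt (hμs u hu)
        rw [hKr0 u hu] at this
        linarith
      have hg : ContinuousAt (fun v : ℝ => (v, s')) u :=
        (continuous_id.prodMk continuous_const).continuousAt
      have hcont : ContinuousAt (fun v => ∫ x, (a x - v) / (s' * (a x - v) + 1) ∂μ) u := by
        have hcomp := ContinuousAt.comp (x := u) (f := fun v : ℝ => (v, s'))
          (g := fun p : ℝ × ℝ => ∫ x, (a x - p.1) / (p.2 * (a x - p.1) + 1) ∂μ)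
          (Stmt17Aux.cont_Kr hmeas hge hAdm') hg
        exact hcomp
      have hev1 : ∀ᶠ v in 𝓝 u, 0 < ∫ x, (a x - v) / (s' * (a x - v) + 1) ∂μ :=
        hcont.eventually (eventually_gt_nhds hpos)
      have hev2 : ∀ᶠ v in 𝓝 u, v ∈ S := hSoc.1.mem_nhds hu
      have hev3 : ∀ᶠ v in 𝓝 u, s' * (v - ξ) < 1 := by
        have hc : ContinuousAt (fun v : ℝ => s' * (v - ξ)) u := by fun_prop
        exact hc.eventually (eventually_lt_nhds hAdm'.2.2.2)
      filter_upwards [hev1, hev2, hev3] with v h1 h2 h3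
      by_contra hcon
      push_neg at hcon
      have hAdm'v : Stmt17Aux.AdmR ξ v s' := ⟨hu0 v h2, huξ v h2, hs'pos, h3⟩
      have hlt := Stmt17Aux.Kr_lt hmeas hge (hAdm v h2) hAdm'v
        (lt_of_le_of_lt hcon hs'b) (hμs v h2)
      rw [hKr0 v h2] at hlt
      linarith
    · intro b hb
      have hs₂ : T u / u < 1 / (u - ξ) := (lt_div_iff₀ (by linarith)).mpr hs₁
      set s' : ℝ := min ((T u / u + b)/2) ((T u / u + 1/(u - ξ))/2) with hs'def
      have hs'gt : T u / u < s' := lt_min (by linarith) (by linarith)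
      have hs'pos : 0 < s' := lt_trans hs₀ hs'gt
      have hs'b : s' < b := lt_of_le_of_lt (min_le_left _ _) (by linarith)
      have hs'adm : s' * (u - ξ) < 1 := by
        have : s' < 1 / (u - ξ) := lt_of_le_of_lt (min_le_right _ _) (by linarith)
        calc s' * (u - ξ) < (1 / (u - ξ)) * (u - ξ) :=
              mul_lt_mul_of_pos_right this (by linarith)
          _ = 1 := one_div_mul_cancel (by linarith : u - ξ ≠ 0)
      have hAdm' : Stmt17Aux.AdmR ξ u s' := ⟨h0, hξu, hs'pos, hs'adm⟩
      have hneg : ∫ x, (a x - u) / (s' * (a x - u) + 1) ∂μ < 0 := by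
        have := Stmt17Aux.Kr_lt hmeas hge ⟨h0, hξu, hs₀, hs₁⟩ hAdm' hs'gt (hμs u hu)
        rw [hKr0 u hu] at this
        linarith
      have hg : ContinuousAt (fun v : ℝ => (v, s')) u :=
        (continuous_id.prodMk continuous_const).continuousAt
      have hcont : ContinuousAt (fun v => ∫ x, (a x - v) / (s' * (a x - v) + 1) ∂μ) u := by
        have hcomp := ContinuousAt.comp (x := u) (f := fun v : ℝ => (v, s'))
          (g := fun p : ℝ × ℝ => ∫ x, (a x - p.1) / (p.2 * (a x - p.1) + 1) ∂μ)
          (Stmt17Aux.cont_Kr hmeas hge hAdm') hg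
        exact hcomp
      have hev1 : ∀ᶠ v in 𝓝 u, ∫ x, (a x - v) / (s' * (a x - v) + 1) ∂μ < 0 :=
        hcont.eventually (eventually_lt_nhds hneg)
      have hev2 : ∀ᶠ v in 𝓝 u, v ∈ S := hSoc.1.mem_nhds hu
      have hev3 : ∀ᶠ v in 𝓝 u, s' * (v - ξ) < 1 := by
        have hc : ContinuousAt (fun v : ℝ => s' * (v - ξ)) u := by fun_prop
        exact hc.eventually (eventually_lt_nhds hs'adm)
      filter_upwards [hev1, hev2, hev3] with v h1 h2 h3
      have hρvs' : T v / v < s' := by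
        by_contra hcon
        push_neg at hcon
        have hAdm'v : Stmt17Aux.AdmR ξ v s' := ⟨hu0 v h2, huξ v h2, hs'pos, h3⟩
        rcases eq_or_lt_of_le hcon with heq | hltc
        · rw [heq] at h1
          rw [hKr0 v h2] at h1
          exact absurd h1 (lt_irrefl 0)
        · have hlt := Stmt17Aux.Kr_lt hmeas hge hAdm'v (hAdm v h2) hltc (hμs v h2)
          rw [hKr0 v h2] at hlt
          linarith
      linarith
  -- the derivative of G
  have hGderiv : ∀ u ∈ S, HasDerivAt G (-(T u / u)) u := by
    intro u hu
    obtain ⟨h0, hξu, hs₀, hs₁⟩ := hAdm u hu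
    have hIr1 : ∫ x, 1 / (T u / u * (a x - u) + 1) ∂μ = 1 := by
      rw [Stmt17Aux.I_eq hmeas hge (hAdm u hu), hKr0 u hu, mul_zero, sub_zero]
    set A : ℝ → ℝ := fun v => -(T v / v * ∫ x, 1 / (T v / v * (a x - u) + 1) ∂μ) with hA
    set B : ℝ → ℝ := fun v => -(T u / u * ∫ x, 1 / (T u / u * (a x - v) + 1) ∂μ) with hB
    have hIrA : ContinuousAt (fun v => ∫ x, 1 / (T v / v * (a x - u) + 1) ∂μ) u := by
      have hg : ContinuousAt (fun v : ℝ => ((u : ℝ), T v / v)) u :=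
        continuousAt_const.prodMk (hρcont u hu)
      have hcomp := ContinuousAt.comp (x := u) (f := fun v : ℝ => ((u : ℝ), T v / v))
        (g := fun p : ℝ × ℝ => ∫ x, 1 / (p.2 * (a x - p.1) + 1) ∂μ)
        (Stmt17Aux.cont_Ir hmeas hge (hAdm u hu)) hg
      exact hcomp
    have hIrB : ContinuousAt (fun v => ∫ x, 1 / (T u / u * (a x - v) + 1) ∂μ) u := by
      have hg : ContinuousAt (fun v : ℝ => (v, T u / u)) u :=
        continuousAt_id.prodMk continuousAt_const
      have hcomp := ContinuousAt.comp (x := u) (f := fun v : ℝ => (v, T u / u))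
        (g := fun p : ℝ × ℝ => ∫ x, 1 / (p.2 * (a x - p.1) + 1) ∂μ)
        (Stmt17Aux.cont_Ir hmeas hge (hAdm u hu)) hg
      exact hcomp
    have hAt : Tendsto A (𝓝 u) (𝓝 (-(T u / u))) := by
      have hc : ContinuousAt A u := ((hρcont u hu).mul hIrA).neg
      have hval : A u = -(T u / u) := by
        simp only [hA, hIr1, mul_one]
      rw [← hval]
      exact hc
    have hBt : Tendsto B (𝓝 u) (𝓝 (-(T u / u))) := by
      have hc : ContinuousAt B u := (continuousAt_const.mul hIrB).neg
      have hval : B u = -(T u / u) := by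
        simp only [hB, hIr1, mul_one]
      rw [← hval]
      exact hc
    have hev2 : ∀ᶠ v in 𝓝 u, v ∈ S := hSoc.1.mem_nhds hu
    have hev4 : ∀ᶠ v in 𝓝 u, 0 < T v / v := (hρcont u hu).eventually (eventually_gt_nhds hs₀)
    have hev5 : ∀ᶠ v in 𝓝 u, (T v / v) * (u - ξ) < 1 :=
      ((hρcont u hu).mul continuousAt_const).eventually (eventually_lt_nhds hs₁)
    have hev6 : ∀ᶠ v in 𝓝 u, (T u / u) * (v - ξ) < 1 := by
      have hc : ContinuousAt (fun v : ℝ => (T u / u) * (v - ξ)) u := by fun_prop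
      exact hc.eventually (eventually_lt_nhds hs₁)
    have hkey : ∀ᶠ v in 𝓝[≠] u,
        min (A v) (B v) ≤ slope G u v ∧ slope G u v ≤ max (A v) (B v) := by
      filter_upwards [nhdsWithin_le_nhds hev2, nhdsWithin_le_nhds hev4,
        nhdsWithin_le_nhds hev5, nhdsWithin_le_nhds hev6, self_mem_nhdsWithin]
        with v h2 h4 h5 h6 hvne
      have hvne' : v ≠ u := hvne
      have hAdmuv : Stmt17Aux.AdmR ξ u (T v / v) := ⟨h0, hξu, h4, h5⟩
      have hAdmvu : Stmt17Aux.AdmR ξ v (T u / u) := ⟨hu0 v h2, huξ v h2, hs₀, h6⟩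
      have hAdmv := hAdm v h2
      have hAdmu : Stmt17Aux.AdmR ξ u (T u / u) := ⟨h0, hξu, hs₀, hs₁⟩
      -- upper bound
      have hup : G v - G u ≤ A v * (v - u) := by
        have e1 := Stmt17Aux.E1 hmeas hge hL hAdmuv hAdmv
        have e3 := Stmt17Aux.E3 hmeas hge hL hAdmu hAdmuv
        rw [hKr0 u hu, mul_zero, add_zero] at e3
        rw [hGeq v (ne_of_gt (hu0 v h2)), hGeq u (ne_of_gt h0)]
        simp only [hA]
        nlinarith [e1, e3]
      -- lower bound
      have hlo : B v * (v - u) ≤ G v - G u := by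
        have e3 := Stmt17Aux.E3 hmeas hge hL hAdmv hAdmvu
        rw [hKr0 v h2, mul_zero, add_zero] at e3
        have e1 := Stmt17Aux.E1 hmeas hge hL hAdmvu hAdmu
        rw [hGeq v (ne_of_gt (hu0 v h2)), hGeq u (ne_of_gt h0)]
        simp only [hB]
        nlinarith [e1, e3]
      have hslope : slope G u v = (G v - G u) / (v - u) := by
        rw [slope_def_field]
      rcases lt_or_gt_of_ne hvne' with hlt | hgt
      · -- v < u
        have hneg : v - u < 0 := by linarith
        constructor
        · refine le_trans (min_le_left _ _) ?_
          rw [hslope, le_div_iff_of_neg hneg]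
          linarith
        · refine le_trans ?_ (le_max_right _ _)
          rw [hslope, div_le_iff_of_neg hneg]
          linarith
      · -- v > u
        have hpos : 0 < v - u := by linarith
        constructor
        · refine le_trans (min_le_right _ _) ?_
          rw [hslope, le_div_iff₀ hpos]
          linarith
        · refine le_trans ?_ (le_max_left _ _)
          rw [hslope, div_le_iff₀ hpos]
          linarith
    rw [hasDerivAt_iff_tendsto_slope]
    have hmin : Tendsto (fun v => min (A v) (B v)) (𝓝[≠] u) (𝓝 (-(T u / u))) := by
      have := (hAt.min hBt).mono_left (nhdsWithin_le_nhds (s := {u}ᶜ))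
      rwa [min_self] at this
    have hmax : Tendsto (fun v => max (A v) (B v)) (𝓝[≠] u) (𝓝 (-(T u / u))) := by
      have := (hAt.max hBt).mono_left (nhdsWithin_le_nhds (s := {u}ᶜ))
      rwa [max_self] at this
    exact tendsto_of_tendsto_of_tendsto_of_le_of_le' hmin hmax
      (hkey.mono fun v h => h.1) (hkey.mono fun v h => h.2)
  have hEderiv : ∀ u ∈ S,
      HasDerivAt (fun v => Real.exp (G v)) (-(T u / u) * Real.exp (G u)) u := by
    intro u hu
    have := (hGderiv u hu).exp
    rwa [mul_comm] at this
  refine ⟨?_, ?_, ?_⟩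
  · intro u hu
    have := hGpos u hu
    calc (1:ℝ) = Real.exp 0 := Real.exp_zero.symm
      _ < Real.exp (G u) := Real.exp_lt_exp.mpr this
  · refine strictAntiOn_of_deriv_neg hSoc.2 ?_ ?_
    · intro u hu
      exact ((hEderiv u hu).continuousAt).continuousWithinAt
    · intro u hu
      rw [hSoc.1.interior_eq] at hu
      rw [(hEderiv u hu).deriv]
      have h1 : 0 < T u / u := (hAdm u hu).2.2.1
      have h2 : 0 < Real.exp (G u) := Real.exp_pos _
      nlinarith
  · exact hEderiv
end
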